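/- arXiv:1011.2167 — 4 statements merged into one kernel-verified Lean document; each statement's English description precedes it below -/
import Mathlib

section
/- Let R = k[x,y] and let F = R⁴ with square-zero R-linear endomorphism δ given by the matrix with rows (0, x, y, 1), (0, 0, 0, −y), (0, 0, 0, x), (0, 0, 0, 0). Then δ² = 0, H(F) := ker δ / im δ ≅ k, and the induced differential δ̄ on k ⊗_R F (reducing matrix entries mod (x,y)) has dim_k(ker δ̄ / im δ̄) = 2. -/
set_option synthInstance.maxHeartbeats 1000000
set_option maxHeartbeats 4000000

open LinearMap MvPolynomial

/-- The homology `ker δ / im δ` of a differential module. -/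
abbrev dHomology {R M : Type*} [CommRing R] [AddCommGroup M] [Module R M]
    (δ : M →ₗ[R] M) : Type _ :=
  LinearMap.ker δ ⧸ (LinearMap.range δ).comap (LinearMap.ker δ).subtype

section Aux

variable {k : Type*} [Field k]

lemma scorpion_prime_X1 : Prime (X 1 : MvPolynomial (Fin 2) k) := by
  have e1 : Prime (X 0 : MvPolynomial (Fin 2) k) := by
    rw [← MulEquiv.prime_iff (MvPolynomial.finSuccEquiv k 1).toMulEquiv]
    have h : ((MvPolynomial.finSuccEquiv k 1).toMulEquiv (X 0) :
        Polynomial (MvPolynomial (Fin 1) k)) = Polynomial.X :=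
      MvPolynomial.finSuccEquiv_X_zero
    rw [h]
    exact Polynomial.prime_X
  have e2 := MulEquiv.prime_iff
      (MvPolynomial.renameEquiv k (Equiv.swap (0 : Fin 2) 1)).toMulEquiv
      (p := (X 1 : MvPolynomial (Fin 2) k))
  rw [← e2]
  have h : ((MvPolynomial.renameEquiv k (Equiv.swap (0 : Fin 2) 1)).toMulEquiv (X 1) :
      MvPolynomial (Fin 2) k) = X 0 := by
    simp [MvPolynomial.renameEquiv_apply, MvPolynomial.rename_X]
  rw [h]
  exact e1

lemma scorpion_not_dvd : ¬ (X 1 : MvPolynomial (Fin 2) k) ∣ X 0 := by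
  rintro ⟨c, hc⟩
  have := congrArg (aeval (![1, 0] : Fin 2 → k)) hc
  simp at this

lemma scorpion_delta_apply (v : Fin 4 → MvPolynomial (Fin 2) k) :
    Matrix.toLin' !![0, X 0, X 1, 1;
                 0, 0,   0,   -(X 1);
                 0, 0,   0,   X 0;
                 0, 0,   0,   0] v
      = ![X 0 * v 1 + X 1 * v 2 + v 3, -(X 1 * v 3), X 0 * v 3, 0] := by
  funext i
  fin_cases i <;>
    simp [Matrix.toLin'_apply, Matrix.mulVec, dotProduct, Fin.sum_univ_four]

end Aux

/-- Over `R = k[x,y]`, the rank 4 free module `F = R⁴` with differential given by the matrix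
`[[0, x, y, 1], [0,0,0,-y], [0,0,0,x], [0,0,0,0]]` satisfies `δ² = 0`,
`H(F) ≅ k = R/(x,y)`, and the induced differential `δ̄` on `k ⊗_R F` (obtained by reducing the
matrix entries modulo `(x,y)`) has homology of `k`-dimension 2. -/
theorem example_scorpion
    (k : Type*) [Field k]
    (M : Matrix (Fin 4) (Fin 4) (MvPolynomial (Fin 2) k))
    (hM : M = !![0, X 0, X 1, 1;
                 0, 0,   0,   -(X 1);
                 0, 0,   0,   X 0;
                 0, 0,   0,   0])
    (δ : (Fin 4 → MvPolynomial (Fin 2) k) →ₗ[MvPolynomial (Fin 2) k]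
         (Fin 4 → MvPolynomial (Fin 2) k))
    (hδ : δ = Matrix.toLin' M)
    (m : Ideal (MvPolynomial (Fin 2) k))
    (hm : m = Ideal.span {(X 0 : MvPolynomial (Fin 2) k), X 1})
    (δbar : (Fin 4 → MvPolynomial (Fin 2) k ⧸ m) →ₗ[MvPolynomial (Fin 2) k ⧸ m]
            (Fin 4 → MvPolynomial (Fin 2) k ⧸ m))
    (hδbar : δbar = Matrix.toLin' (M.map (Ideal.Quotient.mk m))) :
    δ ∘ₗ δ = 0 ∧
    Nonempty (dHomology δ ≃ₗ[MvPolynomial (Fin 2) k] (MvPolynomial (Fin 2) k ⧸ m)) ∧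
    Module.finrank (MvPolynomial (Fin 2) k ⧸ m) (dHomology δbar) = 2 := by
  have hX0 : (X 0 : MvPolynomial (Fin 2) k) ≠ 0 := MvPolynomial.X_ne_zero 0
  have hX1 : (X 1 : MvPolynomial (Fin 2) k) ≠ 0 := MvPolynomial.X_ne_zero 1
  have hδapp : ∀ v, δ v = ![X 0 * v 1 + X 1 * v 2 + v 3, -(X 1 * v 3), X 0 * v 3, 0] := by
    intro v; rw [hδ, hM]; exact scorpion_delta_apply v
  -- membership in m
  have hX0m : (X 0 : MvPolynomial (Fin 2) k) ∈ m := hm ▸ Ideal.subset_span (by simp)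
  have hX1m : (X 1 : MvPolynomial (Fin 2) k) ∈ m := hm ▸ Ideal.subset_span (by simp)
  refine ⟨?_, ?_, ?_⟩
  · -- δ ∘ δ = 0
    apply LinearMap.ext
    intro v
    rw [LinearMap.comp_apply, hδapp, hδapp]
    funext i
    fin_cases i <;> simp <;> ring
  · -- homology ≅ R/m
    -- the map R → dHomology δ, u ↦ class of (u,0,0,0)
    have hmem : ∀ u : MvPolynomial (Fin 2) k,
        (Pi.single (0 : Fin 4) u : Fin 4 → MvPolynomial (Fin 2) k) ∈ LinearMap.ker δ := by
      intro u
      rw [LinearMap.mem_ker, hδapp]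
      funext i
      fin_cases i <;> simp
    set N := (LinearMap.range δ).comap (LinearMap.ker δ).subtype with hN
    set f : MvPolynomial (Fin 2) k →ₗ[MvPolynomial (Fin 2) k] dHomology δ :=
      N.mkQ ∘ₗ ((LinearMap.single (MvPolynomial (Fin 2) k)
        (fun _ : Fin 4 => MvPolynomial (Fin 2) k) 0).codRestrict (LinearMap.ker δ) hmem)
      with hf
    have hfapp : ∀ u, f u = Submodule.Quotient.mk ⟨Pi.single 0 u, hmem u⟩ := by
      intro u; rfl
    have hsurj : Function.Surjective f := by
      intro z
      obtain ⟨⟨v, hv⟩, rfl⟩ := Submodule.Quotient.mk_surjective N z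
      rw [LinearMap.mem_ker, hδapp] at hv
      have hv0 := congrFun hv 0
      have hv1 := congrFun hv 1
      simp at hv0 hv1
      have hv3 : v 3 = 0 := hv1
      rw [hv3, add_zero] at hv0
      -- X 1 divides v 1
      have hdvd : (X 1 : MvPolynomial (Fin 2) k) ∣ X 0 * v 1 := by
        refine ⟨-(v 2), ?_⟩
        have : X 0 * v 1 = -(X 1 * v 2) := by linear_combination hv0
        rw [this]; ring
      have hdvd1 : (X 1 : MvPolynomial (Fin 2) k) ∣ v 1 := by
        rcases (scorpion_prime_X1.2.2 _ _ hdvd) with h | h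
        · exact absurd h scorpion_not_dvd
        · exact h
      obtain ⟨w, hw⟩ := hdvd1
      have hv2 : v 2 = -(X 0 * w) := by
        have h1 : X 1 * (X 0 * w + v 2) = 0 := by
          rw [hw] at hv0; linear_combination hv0
        rcases mul_eq_zero.mp h1 with h | h
        · exact absurd h hX1
        · linear_combination h
      refine ⟨v 0 + w, ?_⟩
      rw [hfapp]
      rw [Submodule.Quotient.eq]
      refine ⟨![0, 0, 0, w], ?_⟩
      rw [hδapp]
      funext i
      fin_cases i <;>
        simp [hw, hv2, hv3, Pi.single_apply] <;> ring
    have hkerf : LinearMap.ker f = m := by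
      ext u
      rw [LinearMap.mem_ker, hfapp, Submodule.Quotient.mk_eq_zero]
      constructor
      · rintro ⟨v, hv⟩
        rw [hδapp] at hv
        have h0 := congrFun hv 0
        have h2 := congrFun hv 2
        simp [Pi.single_apply] at h0 h2
        have hv3 : v 3 = 0 := h2
        rw [hv3, add_zero] at h0
        rw [hm, Ideal.mem_span_pair]
        exact ⟨v 1, v 2, by linear_combination h0⟩
      · intro hu
        rw [hm, Ideal.mem_span_pair] at hu
        obtain ⟨a, b, hab⟩ := hu
        refine ⟨![0, a, b, 0], ?_⟩
        rw [hδapp]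
        show _ = (Pi.single (0 : Fin 4) u : Fin 4 → MvPolynomial (Fin 2) k)
        funext i
        fin_cases i <;> simp [Pi.single_apply] <;> linear_combination hab
    exact ⟨((Submodule.quotEquivOfEq m (LinearMap.ker f) hkerf.symm).trans
      (f.quotKerEquivOfSurjective hsurj)).symm⟩
  · -- finrank of the reduced homology
    have hne : m ≠ ⊤ := by
      intro htop
      have h1 : (1 : MvPolynomial (Fin 2) k) ∈ m := htop ▸ Submodule.mem_top
      rw [hm, Ideal.mem_span_pair] at h1
      obtain ⟨a, b, hab⟩ := h1
      have := congrArg MvPolynomial.constantCoeff hab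
      simp at this
    haveI : Nontrivial (MvPolynomial (Fin 2) k ⧸ m) := Ideal.Quotient.nontrivial_iff.mpr hne
    have hbar : ∀ v : Fin 4 → MvPolynomial (Fin 2) k ⧸ m, δbar v = ![v 3, 0, 0, 0] := by
      intro v
      have hM0 : Ideal.Quotient.mk m (X 0) = 0 := Ideal.Quotient.eq_zero_iff_mem.mpr hX0m
      have hM1 : Ideal.Quotient.mk m (X 1) = 0 := Ideal.Quotient.eq_zero_iff_mem.mpr hX1m
      rw [hδbar, hM]
      funext i
      fin_cases i <;>
        simp [Matrix.toLin'_apply, Matrix.mulVec, dotProduct, Fin.sum_univ_four,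
          hM0, hM1]
    set S := MvPolynomial (Fin 2) k ⧸ m
    set N' := (LinearMap.range δbar).comap (LinearMap.ker δbar).subtype with hN'
    set g : LinearMap.ker δbar →ₗ[S] (Fin 2 → S) :=
      (LinearMap.funLeft S S (![1, 2] : Fin 2 → Fin 4)) ∘ₗ (LinearMap.ker δbar).subtype
      with hg
    have hgapp : ∀ v : LinearMap.ker δbar, g v = fun j => (v : Fin 4 → S) (![1, 2] j) := by
      intro v; rfl
    have hgsurj : Function.Surjective g := by
      intro p
      refine ⟨⟨![0, p 0, p 1, 0], ?_⟩, ?_⟩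
      · rw [LinearMap.mem_ker, hbar]
        funext i
        fin_cases i <;> simp
      · rw [hgapp]
        funext j
        fin_cases j <;> simp
    have hkerg : LinearMap.ker g = N' := by
      ext ⟨v, hv⟩
      rw [LinearMap.mem_ker, hgapp]
      rw [LinearMap.mem_ker, hbar] at hv
      have hv3 : v 3 = 0 := by
        have := congrFun hv 0; simpa using this
      constructor
      · intro h
        have h1 : v 1 = 0 := congrFun h 0
        have h2 : v 2 = 0 := congrFun h 1
        refine ⟨![0, 0, 0, v 0], ?_⟩
        rw [hbar]
        show _ = v
        funext i
        fin_cases i <;> simp [h1, h2, hv3]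
      · rintro ⟨u, hu⟩
        rw [hbar] at hu
        have h1 : v 1 = 0 := by have := congrFun hu 1; simpa using this.symm
        have h2 : v 2 = 0 := by have := congrFun hu 2; simpa using this.symm
        funext j
        fin_cases j <;> simp [h1, h2]
    have equiv3 : dHomology δbar ≃ₗ[S] (Fin 2 → S) :=
      (Submodule.quotEquivOfEq N' (LinearMap.ker g) hkerg.symm).trans
        (g.quotKerEquivOfSurjective hgsurj)
    rw [equiv3.finrank_eq]
    exact Module.finrank_fin_fun S
end

section
/- Let S be a commutative ring and let λ be a superadditive, nonnegative, ordered-monoid-valued function on a class of S-modules closed under submodules and quotients. Suppose given S-module maps ι : A → B, ε : B → C with ε ∘ ι = 0, a surjection ψ_A : A ↠ A'', an injection ι'' : A'' → B'' and ψ_B : B → B'' with ψ_B ∘ ι = ι'' ∘ ψ_A, and an injection φ_C : C' → C, surjection ε' : B' ↠ C', φ_B : B' → B with ε ∘ φ_B = φ_C ∘ ε'. Then λ(B) ≥ λ(im ι'') + λ(im ε'). -/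
open LinearMap

/-- Santoni's rank lemma: let `λ` (here `L`) be a superadditive, nonnegative function on
`S`-modules with values in an ordered commutative monoid. Given `ι : A → B`, `ε : B → C` with
`ε ∘ ι = 0`, a surjection `ψA : A ↠ A''`, injection `ι'' : A'' ↪ B''` and `ψB : B → B''` with
`ψB ∘ ι = ι'' ∘ ψA`, and an injection `φC : C' ↪ C`, surjection `ε' : B' ↠ C'`, `φB : B' → B`
with `ε ∘ φB = φC ∘ ε'`, one has `λ(B) ≥ λ(im ι'') + λ(im ε')`. -/
theorem rank_lemma
    (S : Type*) [CommRing S] (μ : Type*) [AddCommMonoid μ] [PartialOrder μ] [IsOrderedAddMonoid μ]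
    (L : ∀ (M : Type) [AddCommGroup M] [Module S M], μ)
    (hnonneg : ∀ (M : Type) [AddCommGroup M] [Module S M], 0 ≤ L M)
    (hsuper : ∀ (A B C : Type) [AddCommGroup A] [Module S A] [AddCommGroup B] [Module S B]
      [AddCommGroup C] [Module S C] (f : A →ₗ[S] B) (g : B →ₗ[S] C),
      Function.Injective f → Function.Exact f g → Function.Surjective g →
        L A + L C ≤ L B)
    (A B C A'' B'' B' C' : Type)
    [AddCommGroup A] [Module S A] [AddCommGroup B] [Module S B] [AddCommGroup C] [Module S C]
    [AddCommGroup A''] [Module S A''] [AddCommGroup B''] [Module S B'']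
    [AddCommGroup B'] [Module S B'] [AddCommGroup C'] [Module S C']
    (ι : A →ₗ[S] B) (ε : B →ₗ[S] C) (hcomp : ε ∘ₗ ι = 0)
    (ψA : A →ₗ[S] A'') (hψA : Function.Surjective ψA)
    (ι'' : A'' →ₗ[S] B'') (hι'' : Function.Injective ι'')
    (ψB : B →ₗ[S] B'') (hsq1 : ψB ∘ₗ ι = ι'' ∘ₗ ψA)
    (φC : C' →ₗ[S] C) (hφC : Function.Injective φC)
    (ε' : B' →ₗ[S] C') (hε' : Function.Surjective ε')
    (φB : B' →ₗ[S] B) (hsq2 : ε ∘ₗ φB = φC ∘ₗ ε') :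
    L (LinearMap.range ι'') + L (LinearMap.range ε') ≤ L B := by
  -- monotonicity from superadditivity
  have inj_le : ∀ (M N : Type) [AddCommGroup M] [Module S M] [AddCommGroup N] [Module S N]
      (f : M →ₗ[S] N), Function.Injective f → L M ≤ L N := by
    intro M N _ _ _ _ f hf
    have h := hsuper M N (N ⧸ LinearMap.range f) f (Submodule.mkQ _) hf
      (by rw [LinearMap.exact_iff, Submodule.ker_mkQ]) (Submodule.mkQ_surjective _)
    calc L M = L M + 0 := (add_zero _).symm
      _ ≤ L M + L (N ⧸ LinearMap.range f) := add_le_add_right (hnonneg _) _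
      _ ≤ L N := h
  have surj_le : ∀ (M N : Type) [AddCommGroup M] [Module S M] [AddCommGroup N] [Module S N]
      (g : M →ₗ[S] N), Function.Surjective g → L N ≤ L M := by
    intro M N _ _ _ _ g hg
    have h := hsuper (LinearMap.ker g) M N (Submodule.subtype _) g (Submodule.injective_subtype _)
      (by rw [LinearMap.exact_iff, Submodule.range_subtype]) hg
    calc L N = 0 + L N := (zero_add _).symm
      _ ≤ L (LinearMap.ker g) + L N := add_le_add_left (hnonneg _) _
      _ ≤ L M := h
  -- L (range ι'') ≤ L (range ι) via surjection induced by ψB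
  have h1 : L (LinearMap.range ι'') ≤ L (LinearMap.range ι) := by
    refine surj_le _ _ (LinearMap.codRestrict _ (ψB.comp (Submodule.subtype _)) ?_) ?_
    · rintro ⟨_, a, rfl⟩
      have : ψB (ι a) = ι'' (ψA a) := LinearMap.congr_fun hsq1 a
      simp only [LinearMap.comp_apply, Submodule.coe_subtype, this]
      exact ⟨ψA a, rfl⟩
    · rintro ⟨_, a'', rfl⟩
      obtain ⟨a, rfl⟩ := hψA a''
      have : ψB (ι a) = ι'' (ψA a) := LinearMap.congr_fun hsq1 a
      exact ⟨⟨ι a, a, rfl⟩, Subtype.ext (by simpa using this)⟩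
  -- L (range ε') ≤ L (range ε) via injection induced by φC
  have h2 : L (LinearMap.range ε') ≤ L (LinearMap.range ε) := by
    refine inj_le _ _ (LinearMap.codRestrict _ (φC.comp (Submodule.subtype _)) ?_) ?_
    · rintro ⟨_, b', rfl⟩
      have : ε (φB b') = φC (ε' b') := LinearMap.congr_fun hsq2 b'
      exact ⟨φB b', by simpa using this⟩
    · intro x y hxy
      apply Subtype.ext
      apply hφC
      simpa using congrArg Subtype.val hxy
  -- L (range ε) ≤ L (B ⧸ range ι)
  have h3 : L (LinearMap.range ε) ≤ L (B ⧸ LinearMap.range ι) := by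
    have hle : LinearMap.range ι ≤ LinearMap.ker ε.rangeRestrict := by
      rintro _ ⟨a, rfl⟩
      apply Subtype.ext
      simpa using LinearMap.congr_fun hcomp a
    refine surj_le _ _ (Submodule.liftQ _ ε.rangeRestrict hle) ?_
    intro y
    obtain ⟨b, rfl⟩ := ε.surjective_rangeRestrict y
    exact ⟨Submodule.Quotient.mk b, rfl⟩
  -- main splitting
  have h4 : L (LinearMap.range ι) + L (B ⧸ LinearMap.range ι) ≤ L B :=
    hsuper _ _ _ (Submodule.subtype _) (Submodule.mkQ _) (Submodule.injective_subtype _)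
      (by rw [LinearMap.exact_iff, Submodule.ker_mkQ, Submodule.range_subtype])
      (Submodule.mkQ_surjective _)
  exact le_trans (add_le_add h1 (le_trans h2 h3)) h4
end

section
/- Let R = k[x₁,…,x_d] be the ℤᵈ-graded polynomial ring and F a finitely generated ℤᵈ-graded free R-module with a graded square-zero R-linear endomorphism δ whose degree is ≤ 0 in every coordinate of ℤᵈ. Then F admits a free flag: a filtration 0 = F^{−1} ⊆ F^0 ⊆ F^1 ⊆ ⋯ of R-submodules with δ(F^n) ⊆ F^{n−1}, ∪ F^n = F, and each F^n/F^{n−1} free over R. -/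
set_option synthInstance.maxHeartbeats 1000000
set_option maxHeartbeats 1000000

open LinearMap MvPolynomial

/-- `p` is a homogeneous element of `k[x₁,…,x_d]` of multidegree `e ∈ ℤᵈ`:
it is zero, or a scalar multiple of the monomial with exponent vector `e`. -/
def IsHomogeneousOfDeg {k : Type*} [Field k] {d : ℕ}
    (p : MvPolynomial (Fin d) k) (e : Fin d → ℤ) : Prop :=
  p = 0 ∨ ∃ (c : k) (mo : Fin d →₀ ℕ), (∀ l, (mo l : ℤ) = e l) ∧ p = monomial mo c

section HomLemmas

variable {k : Type*} [Field k] {d : ℕ}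

lemma IsHomogeneousOfDeg.zero (e : Fin d → ℤ) :
    IsHomogeneousOfDeg (0 : MvPolynomial (Fin d) k) e := Or.inl rfl

lemma IsHomogeneousOfDeg.sub {p q : MvPolynomial (Fin d) k} {e : Fin d → ℤ}
    (hp : IsHomogeneousOfDeg p e) (hq : IsHomogeneousOfDeg q e) :
    IsHomogeneousOfDeg (p - q) e := by
  rcases hp with rfl | ⟨c, mo, hmo, rfl⟩
  · rcases hq with rfl | ⟨c, mo, hmo, rfl⟩
    · exact Or.inl (by simp)
    · exact Or.inr ⟨-c, mo, hmo, by simp [map_neg]⟩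
  · rcases hq with rfl | ⟨c', mo', hmo', rfl⟩
    · exact Or.inr ⟨c, mo, hmo, by simp⟩
    · have hmm : mo = mo' := by
        ext l
        have h1 := hmo l; have h2 := hmo' l
        omega
      subst hmm
      exact Or.inr ⟨c - c', mo, hmo, by rw [← map_sub]⟩

lemma IsHomogeneousOfDeg.mul {p q : MvPolynomial (Fin d) k} {e1 e2 e3 : Fin d → ℤ}
    (hp : IsHomogeneousOfDeg p e1) (hq : IsHomogeneousOfDeg q e2)
    (h : ∀ l, e3 l = e1 l + e2 l) :
    IsHomogeneousOfDeg (p * q) e3 := by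
  rcases hp with rfl | ⟨c, mo, hmo, rfl⟩
  · exact Or.inl (by simp)
  rcases hq with rfl | ⟨c', mo', hmo', rfl⟩
  · exact Or.inl (by simp)
  refine Or.inr ⟨c * c', mo + mo', fun l => ?_, by rw [monomial_mul]⟩
  have := hmo l; have := hmo' l; have := h l
  rw [Finsupp.add_apply]
  push_cast
  omega

lemma IsHomogeneousOfDeg.const (u : k) :
    IsHomogeneousOfDeg (C u : MvPolynomial (Fin d) k) (fun _ => 0) :=
  Or.inr ⟨u, 0, by simp, C_apply⟩

end HomLemmas

lemma key_lemma (k : Type*) [Field k] (d : ℕ) (n : ℕ) :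
    ∀ {F : Type*} [AddCommGroup F] [Module (MvPolynomial (Fin d) k) F]
      {ι : Type*} [Fintype ι], Fintype.card ι ≤ n →
      ∀ (b : Module.Basis ι (MvPolynomial (Fin d) k) F) (deg : ι → Fin d → ℤ)
        (δ : F →ₗ[MvPolynomial (Fin d) k] F), δ ∘ₗ δ = 0 →
      ∀ (dd : Fin d → ℤ), (∀ l, dd l ≤ 0) →
      (∀ i j, IsHomogeneousOfDeg (b.repr (δ (b j)) i) (fun l => deg j l + dd l - deg i l)) →
      ∃ (c : ι → F) (h : ι → ℕ),
        Submodule.span (MvPolynomial (Fin d) k) (Set.range c) = ⊤ ∧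
        ∀ j, δ (c j) ∈ Submodule.span (MvPolynomial (Fin d) k) (c '' {i | h i < h j}) := by
  induction n with
  | zero =>
    intro F _ _ ι _ hcard b deg δ hsq dd hdd hgr
    have : IsEmpty ι := by
      rw [Nat.le_zero, Fintype.card_eq_zero_iff] at hcard
      exact hcard
    exact ⟨b, fun _ => 0, b.span_eq, fun j => isEmptyElim j⟩
  | succ n IH =>
    intro F _ _ ι _ hcard b deg δ hsq dd hdd hgr
    classical
    by_cases hE : IsEmpty ι
    · exact ⟨b, fun _ => 0, b.span_eq, fun j => isEmptyElim j⟩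
    have hNE : Nonempty ι := not_isEmpty_iff.mp hE
    set R := MvPolynomial (Fin d) k with hR
    set M : ι → ι → R := fun i j => b.repr (δ (b j)) i with hMdef
    have hδb : ∀ j, δ (b j) = ∑ l, M l j • b l := fun j => (b.sum_repr (δ (b j))).symm
    have hδδ : ∀ x, δ (δ x) = 0 := fun x => by
      have := LinearMap.ext_iff.mp hsq x
      simpa using this
    have hM2 : ∀ i j, ∑ l, M l j * M i l = 0 := by
      intro i j
      have h1 : δ (δ (b j)) = ∑ l, M l j • δ (b l) := by
        rw [hδb j, map_sum]
        simp
      have h2 : b.repr (δ (δ (b j))) i = ∑ l, M l j * M i l := by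
        rw [h1, map_sum]
        simp [Finsupp.coe_finset_sum, hMdef]
      rw [hδδ] at h2
      simpa using h2.symm
    by_cases hconst : ∀ i j, constantCoeff (M i j) = 0
    · -- Case 2 : all entries in the maximal ideal; split off a basis vector of minimal degree
      obtain ⟨j₁, -, hmin'⟩ := Set.Finite.exists_minimalFor deg Set.univ (Set.finite_univ)
        (Set.univ_nonempty)
      have hmin : ∀ i ∈ Set.univ, deg i ≤ deg j₁ → deg j₁ = deg i :=
        fun i hi hle => le_antisymm (hmin' hi hle) hle
      have hj₁ : δ (b j₁) = 0 := by
        have hrepr : ∀ i, M i j₁ = 0 := by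
          intro i
          by_contra hne
          rcases hgr i j₁ with h0 | ⟨c, mo, hmo, hmon⟩
          · exact hne h0
          have hc : c ≠ 0 := by
            rintro rfl
            apply hne
            show b.repr (δ (b j₁)) i = 0
            rw [hmon]; simp
          have hle : deg i ≤ deg j₁ := by
            rw [Pi.le_def]
            intro l
            have h1 : (mo l : ℤ) = deg j₁ l + dd l - deg i l := hmo l
            have h2 := hdd l
            have h3 : (0:ℤ) ≤ (mo l : ℤ) := Int.natCast_nonneg _
            omega
          have heq : deg j₁ = deg i := hmin i (Set.mem_univ i) hle
          have hmo0 : mo = 0 := by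
            ext l
            have h1 : (mo l : ℤ) = deg j₁ l + dd l - deg i l := hmo l
            have h2 := hdd l
            have h3 := congrFun heq l
            simp only [Finsupp.coe_zero, Pi.zero_apply]
            omega
          have h0 : constantCoeff ((monomial mo) c) = 0 := by
            rw [← hmon]; exact hconst i j₁
          rw [hmo0] at h0
          simp [constantCoeff_monomial] at h0
          exact hc h0
        have : b.repr (δ (b j₁)) = 0 := Finsupp.ext hrepr
        exact b.repr.map_eq_zero_iff.mp this
      -- the submodule spanned by the other basis vectors
      set sset : Set ι := {i : ι | i ≠ j₁} with hsset
      set v' : sset → F := fun i => b ↑i with hv'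
      have hli' : LinearIndependent R v' := b.linearIndependent.comp _ Subtype.val_injective
      set F' : Submodule R F := Submodule.span R (Set.range v') with hF'
      have hF'img : F' = Submodule.span R (⇑b '' sset) := by
        rw [hF', Set.image_eq_range]
      have hmemF' : ∀ x : F, b.repr x j₁ = 0 → x ∈ F' := by
        intro x hx
        rw [hF'img, Module.Basis.mem_span_image]
        intro i hi
        simp only [Finsupp.mem_support_iff, Finset.mem_coe] at hi
        intro hij
        exact hi (hij ▸ hx)
      set b' : Module.Basis sset R F' := Module.Basis.span hli' with hb'
      set π' : F →ₗ[R] F := LinearMap.id - (b.coord j₁).smulRight (b j₁) with hπ'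
      have hπ'apply : ∀ x, π' x = x - b.repr x j₁ • b j₁ := fun x => rfl
      have hπ'mem : ∀ x, π' x ∈ F' := by
        intro x
        apply hmemF'
        rw [hπ'apply]
        simp [Module.Basis.repr_self, Finsupp.single_apply]
      set δ' : F' →ₗ[R] F' :=
        LinearMap.codRestrict F' (π' ∘ₗ δ ∘ₗ F'.subtype) (fun z => hπ'mem _) with hδ'
      have hδ'apply : ∀ z : F', (δ' z : F) = δ (z : F) - b.repr (δ (z : F)) j₁ • b j₁ :=
        fun z => rfl
      have hsq' : δ' ∘ₗ δ' = 0 := by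
        apply LinearMap.ext
        intro z
        apply Subtype.ext
        rw [LinearMap.comp_apply, hδ'apply, hδ'apply, map_sub, map_smul, hj₁, smul_zero,
          sub_zero, hδδ]
        simp
      have hcoord' : ∀ (z : F') (i : sset), b'.repr z i = b.repr (z : F) i := by
        have hmaps : ∀ i : sset,
            (Finsupp.lapply i ∘ₗ (b'.repr : F' →ₗ[R] (sset →₀ R))) =
            ((Finsupp.lapply (i : ι) ∘ₗ (b.repr : F →ₗ[R] (ι →₀ R))) ∘ₗ F'.subtype) := by
          intro i
          apply b'.ext
          intro j
          simp only [LinearMap.comp_apply, Module.Basis.repr_self, Finsupp.lapply_apply,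
            Submodule.subtype_apply]
          rw [show ((b' j : F)) = v' j from congrArg Subtype.val (Module.Basis.span_apply hli' j)]
          simp [hv', Module.Basis.repr_self, Finsupp.single_apply, Subtype.ext_iff]
        intro z i
        exact congrArg (fun f => f z) (hmaps i)
      have hb'val : ∀ j : sset, (b' j : F) = b ↑j := by
        intro j
        rw [hb', Module.Basis.span_apply]
      have hgr' : ∀ i j : sset, IsHomogeneousOfDeg (b'.repr (δ' (b' j)) i)
          (fun l => deg ↑j l + dd l - deg ↑i l) := by
        intro i j
        have hkey : b'.repr (δ' (b' j)) i = M ↑i ↑j := by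
          rw [hcoord', hδ'apply, hb'val, map_sub, map_smul]
          have h1 : (b.repr (b j₁)) ↑i = 0 := by
            rw [Module.Basis.repr_self, Finsupp.single_apply]
            exact if_neg (fun h => i.2 h.symm)
          simp only [Finsupp.sub_apply, Finsupp.smul_apply, h1, smul_eq_mul, mul_zero, sub_zero]
          rfl
        rw [hkey]
        exact hgr ↑i ↑j
      have hcard' : Fintype.card sset ≤ n := by
        have : Fintype.card sset < Fintype.card ι :=
          Fintype.card_subtype_lt (x := j₁) (by simp [hsset])
        omega
      obtain ⟨c', h', hspan', hδprop'⟩ := IH hcard' b' (fun i => deg ↑i) δ' hsq' dd hdd hgr'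
      -- assemble
      set cfun : ι → F := fun i => if hi : i = j₁ then b j₁ else ↑(c' ⟨i, hi⟩) with hcfun
      set hfun : ι → ℕ := fun i => if hi : i = j₁ then 0 else h' ⟨i, hi⟩ + 1 with hhfun
      have hcj₁ : cfun j₁ = b j₁ := by simp [hcfun]
      have hcne : ∀ (i : ι) (hi : i ≠ j₁), cfun i = ↑(c' ⟨i, hi⟩) := by
        intro i hi; simp [hcfun, hi]
      have hhj₁ : hfun j₁ = 0 := by simp [hhfun]
      have hhne : ∀ (i : ι) (hi : i ≠ j₁), hfun i = h' ⟨i, hi⟩ + 1 := by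
        intro i hi; simp [hhfun, hi]
      have hF'le : F' ≤ Submodule.span R (Set.range cfun) := by
        have h1 : F' = Submodule.map F'.subtype ⊤ := by
          rw [Submodule.map_top, Submodule.range_subtype]
        rw [h1, ← hspan', Submodule.map_span]
        apply Submodule.span_le.mpr
        rintro x ⟨y, ⟨i, rfl⟩, rfl⟩
        apply Submodule.subset_span
        exact ⟨↑i, by rw [hcne ↑i i.2]; rfl⟩
      refine ⟨cfun, hfun, ?_, ?_⟩
      · rw [eq_top_iff, ← b.span_eq]
        apply Submodule.span_le.mpr
        rintro x ⟨i, rfl⟩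
        by_cases hi : i = j₁
        · rw [hi, ← hcj₁]; exact Submodule.subset_span ⟨j₁, rfl⟩
        · have : b i = v' ⟨i, hi⟩ := rfl
          rw [this]
          exact hF'le (Submodule.subset_span ⟨⟨i, hi⟩, rfl⟩)
      · intro j
        by_cases hj : j = j₁
        · subst hj; rw [hcj₁, hj₁]; exact Submodule.zero_mem _
        · rw [hcne j hj]
          set z : F' := c' ⟨j, hj⟩ with hz
          have hdec : δ (z : F) = ↑(δ' z) + (b.repr (δ (z : F)) j₁) • b j₁ := by
            rw [hδ'apply]; abel
          rw [hdec]
          apply Submodule.add_mem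
          · have h2 := hδprop' ⟨j, hj⟩
            have h3 : (δ' z : F) ∈ Submodule.map F'.subtype
                (Submodule.span R (c' '' {i | h' i < h' ⟨j, hj⟩})) :=
              ⟨δ' z, h2, rfl⟩
            rw [Submodule.map_span] at h3
            refine Submodule.span_le.mpr ?_ h3
            rintro x ⟨y, ⟨i, hi, rfl⟩, rfl⟩
            apply Submodule.subset_span
            refine ⟨↑i, ?_, ?_⟩
            · show hfun ↑i < hfun j
              rw [hhne ↑i i.2, hhne j hj]
              exact Nat.add_lt_add_right hi 1
            · rw [hcne ↑i i.2]; rfl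
          · apply Submodule.smul_mem
            apply Submodule.subset_span
            refine ⟨j₁, ?_, hcj₁⟩
            show hfun j₁ < hfun j
            rw [hhj₁, hhne j hj]
            omega
    · -- Case 1 : some entry is a nonzero constant; split off a contractible pair
      push_neg at hconst
      obtain ⟨ia, ja, hne0⟩ := hconst
      set m₀ : ι → ι → k := fun i j => constantCoeff (M i j) with hm₀
      have hm₀sq : ∀ i j, ∑ l, m₀ l j * m₀ i l = 0 := by
        intro i j
        have h1 := congrArg constantCoeff (hM2 i j)
        simpa [map_sum] using h1
      have hoff : ∃ i₀ j₀, i₀ ≠ j₀ ∧ m₀ i₀ j₀ ≠ 0 := by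
        by_contra hno
        push_neg at hno
        have hia : ia = ja := by
          by_contra hne
          exact hne0 (hno ia ja hne)
        subst hia
        have h2 := hm₀sq ia ia
        rw [Finset.sum_eq_single ia] at h2
        · exact hne0 (mul_self_eq_zero.mp h2)
        · intro l _ hl
          rw [hno l ia hl, zero_mul]
        · simp
      obtain ⟨i₀, j₀, hne, hc0⟩ := hoff
      have hc0' : constantCoeff (b.repr (δ (b j₀)) i₀) ≠ 0 := hc0
      obtain ⟨c, mo, hmo, hmon⟩ : ∃ (c : k) (mo : Fin d →₀ ℕ),
          (∀ l, (mo l : ℤ) = deg j₀ l + dd l - deg i₀ l) ∧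
          b.repr (δ (b j₀)) i₀ = monomial mo c := by
        rcases hgr i₀ j₀ with h0 | hh
        · exact absurd (by rw [h0]; simp) hc0'
        · exact hh
      have hmo0 : mo = 0 := by
        by_contra hmo0
        apply hc0'
        rw [hmon, constantCoeff_monomial, if_neg hmo0]
      have hcne : c ≠ 0 := by
        intro h
        apply hc0'
        rw [hmon, h]
        simp
      have hMc : b.repr (δ (b j₀)) i₀ = C c := by
        rw [hmon, hmo0, ← C_apply]
      have hdeg₀ : ∀ l, deg i₀ l = deg j₀ l + dd l := by
        intro l
        have h1 := hmo l
        rw [hmo0] at h1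
        simp only [Finsupp.coe_zero, Pi.zero_apply, Nat.cast_zero] at h1
        omega
      set u : k := c⁻¹ with hu
      set e : F := b j₀ with he
      set f : F := δ e with hf
      set φ : F →ₗ[R] R := (C u : R) • b.coord i₀ with hφ
      have hφapply : ∀ x, φ x = C u * b.repr x i₀ := fun x => rfl
      set ψ : F →ₗ[R] R := φ ∘ₗ δ with hψ
      have hψapply : ∀ x, ψ x = C u * b.repr (δ x) i₀ := fun x => rfl
      have hδf : δ f = 0 := hδδ _
      have hCuc : (C u : R) * C c = 1 := by
        rw [← C_mul, hu, inv_mul_cancel₀ hcne, C_1]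
      have hψe : ψ e = 1 := by
        rw [hψapply]
        show (C u : R) * b.repr f i₀ = 1
        rw [hMc, hCuc]
      have hφf : φ f = 1 := by
        rw [hφapply, hMc, hCuc]
      have hφe : φ e = 0 := by
        rw [hφapply, he, Module.Basis.repr_self, Finsupp.single_apply,
          if_neg (fun hh => hne hh.symm), mul_zero]
      have hψf : ψ f = 0 := by
        rw [hψapply, hδf]
        simp
      have hψδ : ∀ x, ψ (δ x) = 0 := by
        intro x
        rw [hψapply, hδδ]
        simp
      -- the new basis
      set v : ι → F := fun i => if i = j₀ then e else if i = i₀ then f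
        else b i - ψ (b i) • e with hv
      have hvj₀ : v j₀ = e := by simp [hv]
      have hvi₀ : v i₀ = f := by simp [hv, hne]
      have hvother : ∀ i, i ≠ i₀ → i ≠ j₀ → v i = b i - ψ (b i) • e := by
        intro i h1 h2
        simp [hv, h1, h2]
      haveI : Module.Finite R F := Module.Finite.of_basis b
      set T : F →ₗ[R] F := b.constr ℕ v with hT
      have hTb : ∀ i, T (b i) = v i := fun i => b.constr_basis ℕ v i
      have hemem : e ∈ LinearMap.range T := ⟨b j₀, by rw [hTb, hvj₀]⟩
      have hfmem : f ∈ LinearMap.range T := ⟨b i₀, by rw [hTb, hvi₀]⟩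
      have hother : ∀ i, i ≠ i₀ → b i ∈ LinearMap.range T := by
        intro i hi
        by_cases hij : i = j₀
        · rw [hij, ← he]
          exact hemem
        · have hbi : b i = v i + ψ (b i) • e := by
            rw [hvother i hi hij]
            abel
          rw [hbi]
          exact Submodule.add_mem _ ⟨b i, hTb i⟩ (Submodule.smul_mem _ _ hemem)
      have hi₀mem : b i₀ ∈ LinearMap.range T := by
        have hsum : f = ∑ l, M l j₀ • b l := hδb j₀
        have hsplit : f = (C c : R) • b i₀ + ∑ l ∈ Finset.univ.erase i₀, M l j₀ • b l := by
          rw [hsum, ← Finset.add_sum_erase _ _ (Finset.mem_univ i₀)]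
          congr 1
          show (b.repr f i₀ : R) • b i₀ = (C c : R) • b i₀
          rw [show (b.repr f i₀ : R) = C c from hMc]
        have hbi₀ : b i₀ = (C u : R) • f - (C u : R) • ∑ l ∈ Finset.univ.erase i₀, M l j₀ • b l := by
          rw [hsplit, smul_add, smul_smul, hCuc, one_smul]
          abel
        rw [hbi₀]
        refine Submodule.sub_mem _ (Submodule.smul_mem _ _ hfmem)
          (Submodule.smul_mem _ _ (Submodule.sum_mem _ ?_))
        intro l hl
        exact Submodule.smul_mem _ _ (hother l (Finset.ne_of_mem_erase hl))
      have hTsurj : Function.Surjective T := by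
        rw [← LinearMap.range_eq_top, eq_top_iff, ← b.span_eq]
        apply Submodule.span_le.mpr
        rintro x ⟨i, rfl⟩
        by_cases hi : i = i₀
        · rw [hi]
          exact hi₀mem
        · exact hother i hi
      have hTinj : Function.Injective T :=
        OrzechProperty.injective_of_surjective_endomorphism T hTsurj
      set cv : Module.Basis ι R F := b.map (LinearEquiv.ofBijective T ⟨hTinj, hTsurj⟩) with hcv
      have hcvapp : ∀ i, cv i = v i := by
        intro i
        rw [hcv, Module.Basis.map_apply]
        exact hTb i
      -- coordinate functionals of the new basis
      have hψcoord : ∀ x, cv.repr x j₀ = ψ x := by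
        have hfun : (Finsupp.lapply j₀ ∘ₗ (cv.repr : F →ₗ[R] (ι →₀ R))) = ψ := by
          apply cv.ext
          intro i
          simp only [LinearMap.comp_apply, LinearEquiv.coe_coe, Finsupp.lapply_apply,
            Module.Basis.repr_self]
          rw [hcvapp i]
          by_cases hij : i = j₀
          · subst hij
            rw [hvj₀, hψe, Finsupp.single_apply, if_pos rfl]
          · rw [Finsupp.single_apply, if_neg hij]
            by_cases hii : i = i₀
            · subst hii
              rw [hvi₀, hψf]
            · rw [hvother i hii hij, map_sub, map_smul, hψe, smul_eq_mul, mul_one, sub_self]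
        intro x
        exact congrArg (fun g => g x) hfun
      have hφcoord : ∀ x, cv.repr x i₀ = φ x := by
        have hfun : (Finsupp.lapply i₀ ∘ₗ (cv.repr : F →ₗ[R] (ι →₀ R))) = φ := by
          apply cv.ext
          intro i
          simp only [LinearMap.comp_apply, LinearEquiv.coe_coe, Finsupp.lapply_apply,
            Module.Basis.repr_self]
          rw [hcvapp i]
          by_cases hij : i = j₀
          · subst hij
            rw [hvj₀, hφe, Finsupp.single_apply, if_neg (fun hh => hne hh.symm)]
          · rw [Finsupp.single_apply]
            by_cases hii : i = i₀
            · subst hii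
              rw [hvi₀, hφf, if_pos rfl]
            · rw [if_neg hii, hvother i hii hij, map_sub, map_smul, hφe, smul_eq_mul,
                mul_zero, sub_zero, hφapply, Module.Basis.repr_self, Finsupp.single_apply,
                if_neg hii, mul_zero]
        intro x
        exact congrArg (fun g => g x) hfun
      -- the projection
      set π : F →ₗ[R] F := LinearMap.id - ψ.smulRight e - φ.smulRight f with hπ
      have hπapply : ∀ x, π x = x - ψ x • e - φ x • f := fun _ => rfl
      have hπj₀ : ∀ x, cv.repr (π x) j₀ = 0 := by
        intro x
        rw [hψcoord, hπapply, map_sub, map_sub, map_smul, map_smul, hψe, hψf]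
        simp
      have hπi₀ : ∀ x, cv.repr (π x) i₀ = 0 := by
        intro x
        rw [hφcoord, hπapply, map_sub, map_sub, map_smul, map_smul, hφe, hφf]
        simp
      have hecv : e = cv j₀ := ((hcvapp j₀).trans hvj₀).symm
      have hfcv : f = cv i₀ := ((hcvapp i₀).trans hvi₀).symm
      have hπother : ∀ x (i : ι), i ≠ i₀ → i ≠ j₀ → cv.repr (π x) i = cv.repr x i := by
        intro x i h1 h2
        have he' : cv.repr e i = 0 := by
          rw [hecv, Module.Basis.repr_self, Finsupp.single_apply, if_neg (fun hh => h2 hh.symm)]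
        have hf' : cv.repr f i = 0 := by
          rw [hfcv, Module.Basis.repr_self, Finsupp.single_apply, if_neg (fun hh => h1 hh.symm)]
        rw [hπapply, map_sub, map_sub, map_smul, map_smul]
        simp only [Finsupp.sub_apply, Finsupp.smul_apply, he', hf', smul_eq_mul,
          mul_zero, sub_zero]
      have hπf : π f = 0 := by
        rw [hπapply, hψf, hφf]
        simp
      -- the complement submodule
      set sset : Set ι := {i | i ≠ i₀ ∧ i ≠ j₀} with hsset
      set v' : sset → F := fun i => cv ↑i with hv'
      have hli' : LinearIndependent R v' := cv.linearIndependent.comp _ Subtype.val_injective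
      set F' : Submodule R F := Submodule.span R (Set.range v') with hF'
      have hF'img : F' = Submodule.span R (⇑cv '' sset) := by
        rw [hF', Set.image_eq_range]
      have hmemF' : ∀ x : F, cv.repr x i₀ = 0 → cv.repr x j₀ = 0 → x ∈ F' := by
        intro x h1 h2
        rw [hF'img, Module.Basis.mem_span_image]
        intro i hi
        simp only [Finsupp.mem_support_iff, Finset.mem_coe] at hi
        exact ⟨fun hh => hi (by rw [hh]; exact h1), fun hh => hi (by rw [hh]; exact h2)⟩
      set b' : Module.Basis sset R F' := Module.Basis.span hli' with hb'
      have hπmem : ∀ x, π x ∈ F' := fun x => hmemF' _ (hπi₀ x) (hπj₀ x)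
      set δ' : F' →ₗ[R] F' :=
        LinearMap.codRestrict F' (π ∘ₗ δ ∘ₗ F'.subtype) (fun z => hπmem _) with hδ'
      have hδ'apply : ∀ z : F', (δ' z : F) = π (δ (z : F)) := fun _ => rfl
      have hδπ : ∀ y, δ (π y) = δ y - ψ y • f := by
        intro y
        rw [hπapply, map_sub, map_sub, map_smul, map_smul, show δ e = f from rfl, hδf,
          smul_zero, sub_zero]
      have hsq' : δ' ∘ₗ δ' = 0 := by
        apply LinearMap.ext
        intro z
        apply Subtype.ext
        show π (δ (π (δ (z : F)))) = ((0 : F' →ₗ[R] F') z : F)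
        rw [hδπ, hδδ, zero_sub, map_neg, map_smul, hπf, smul_zero, neg_zero]
        rfl
      have hcoord' : ∀ (z : F') (i : sset), b'.repr z i = cv.repr (z : F) i := by
        have hmaps : ∀ i : sset,
            (Finsupp.lapply i ∘ₗ (b'.repr : F' →ₗ[R] (sset →₀ R))) =
            ((Finsupp.lapply (i : ι) ∘ₗ (cv.repr : F →ₗ[R] (ι →₀ R))) ∘ₗ F'.subtype) := by
          intro i
          apply b'.ext
          intro j
          simp only [LinearMap.comp_apply, Module.Basis.repr_self, Finsupp.lapply_apply,
            Submodule.subtype_apply]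
          rw [show ((b' j : F)) = v' j from congrArg Subtype.val (Module.Basis.span_apply hli' j)]
          simp [hv', Module.Basis.repr_self, Finsupp.single_apply, Subtype.ext_iff]
        intro z i
        exact congrArg (fun g => g z) (hmaps i)
      have hb'val : ∀ j : sset, (b' j : F) = cv ↑j := fun j => congrArg Subtype.val (Module.Basis.span_apply hli' j)
      -- express coordinates of the new basis in terms of the old one
      have hcvb : ∀ (i : ι), i ≠ i₀ → i ≠ j₀ → ∀ y : F,
          cv.repr y i = b.repr y i - M i j₀ * φ y := by
        intro i h1 h2
        have hfun : (Finsupp.lapply i ∘ₗ (cv.repr : F →ₗ[R] (ι →₀ R))) =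
            (Finsupp.lapply i ∘ₗ (b.repr : F →ₗ[R] (ι →₀ R))) - (M i j₀) • φ := by
          apply cv.ext
          intro i'
          simp only [LinearMap.comp_apply, LinearEquiv.coe_coe, Finsupp.lapply_apply,
            LinearMap.sub_apply, LinearMap.smul_apply, Module.Basis.repr_self, smul_eq_mul]
          rw [hcvapp i']
          by_cases h3 : i' = j₀
          · subst h3
            rw [hvj₀, hφe, mul_zero, sub_zero, Finsupp.single_apply, if_neg (fun hh => h2 hh.symm),
              he, Module.Basis.repr_self, Finsupp.single_apply, if_neg (fun hh => h2 hh.symm)]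
          · by_cases h4 : i' = i₀
            · subst h4
              rw [hvi₀, hφf, mul_one, Finsupp.single_apply, if_neg (fun hh => h1 hh.symm)]
              show (0 : R) = b.repr f i - M i j₀
              rw [show (b.repr f i : R) = M i j₀ from rfl, sub_self]
            · rw [hvother i' h4 h3, Finsupp.single_apply]
              have hφv : φ (b i' - ψ (b i') • e) = 0 := by
                rw [map_sub, map_smul, hφe, smul_zero, sub_zero, hφapply,
                  Module.Basis.repr_self, Finsupp.single_apply, if_neg h4, mul_zero]
              rw [hφv, mul_zero, sub_zero, map_sub, map_smul]
              have hbe : b.repr e i = 0 := by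
                rw [he, Module.Basis.repr_self, Finsupp.single_apply, if_neg (fun hh => h2 hh.symm)]
              simp only [Finsupp.sub_apply, Finsupp.smul_apply, hbe, smul_eq_mul, mul_zero,
                sub_zero, Module.Basis.repr_self, Finsupp.single_apply]
        intro y
        exact congrArg (fun g => g y) hfun
      -- the matrix entries of the induced differential
      have hN : ∀ (i j : sset), b'.repr (δ' (b' j)) i =
          M ↑i ↑j - M ↑i j₀ * (C u * M i₀ ↑j) := by
        intro i j
        rw [hcoord', hδ'apply, hb'val, hπother _ _ i.2.1 i.2.2]
        have hδcv : δ (cv ↑j) = δ (b ↑j) - ψ (b ↑j) • f := by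
          rw [hcvapp, hvother _ j.2.1 j.2.2, map_sub, map_smul, show δ e = f from rfl]
        rw [hδcv, map_sub, map_smul]
        have hfi : cv.repr f ↑i = 0 := by
          rw [hfcv, Module.Basis.repr_self, Finsupp.single_apply, if_neg (fun hh => i.2.1 hh.symm)]
        simp only [Finsupp.sub_apply, Finsupp.smul_apply, hfi, smul_eq_mul, mul_zero, sub_zero]
        rw [hcvb ↑i i.2.1 i.2.2]
        rfl
      have hgr' : ∀ i j : sset, IsHomogeneousOfDeg (b'.repr (δ' (b' j)) i)
          (fun l => deg ↑j l + dd l - deg ↑i l) := by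
        intro i j
        rw [hN]
        apply IsHomogeneousOfDeg.sub (hgr ↑i ↑j)
        apply IsHomogeneousOfDeg.mul (hgr ↑i j₀)
          (e2 := fun l => deg ↑j l - deg j₀ l)
        · apply IsHomogeneousOfDeg.mul (IsHomogeneousOfDeg.const u) (hgr i₀ ↑j)
          intro l
          have := hdeg₀ l
          omega
        · intro l
          beta_reduce
          omega
      have hcard' : Fintype.card sset ≤ n := by
        have hlt : Fintype.card sset < Fintype.card ι :=
          Fintype.card_subtype_lt (x := i₀) (by simp [hsset])
        omega
      obtain ⟨c', h', hspan', hδprop'⟩ := IH hcard' b' (fun i => deg ↑i) δ' hsq' dd hdd hgr'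
      -- assemble
      set cfun : ι → F := fun i => if h2 : i = j₀ then e else if h1 : i = i₀ then f
        else ↑(c' ⟨i, h1, h2⟩) with hcfun
      set hfun2 : ι → ℕ := fun i => if i = j₀ then 1 else if h1 : i = i₀ then 0
        else (if h2 : i = j₀ then 0 else h' ⟨i, h1, h2⟩) + 1 with hhfun2
      have hcj₀ : cfun j₀ = e := by simp [hcfun]
      have hci₀ : cfun i₀ = f := by simp [hcfun, hne]
      have hcoth : ∀ (i : ι) (h1 : i ≠ i₀) (h2 : i ≠ j₀), cfun i = ↑(c' ⟨i, h1, h2⟩) := by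
        intro i h1 h2
        simp [hcfun, h1, h2]
      have hhj₀ : hfun2 j₀ = 1 := by simp [hhfun2]
      have hhi₀ : hfun2 i₀ = 0 := by simp [hhfun2, hne]
      have hhoth : ∀ (i : ι) (h1 : i ≠ i₀) (h2 : i ≠ j₀), hfun2 i = h' ⟨i, h1, h2⟩ + 1 := by
        intro i h1 h2
        simp [hhfun2, h1, h2]
      have hF'le : F' ≤ Submodule.span R (Set.range cfun) := by
        have h1 : F' = Submodule.map F'.subtype ⊤ := by
          rw [Submodule.map_top, Submodule.range_subtype]
        rw [h1, ← hspan', Submodule.map_span]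
        apply Submodule.span_le.mpr
        rintro x ⟨y, ⟨i, rfl⟩, rfl⟩
        apply Submodule.subset_span
        exact ⟨↑i, by rw [hcoth ↑i i.2.1 i.2.2]; rfl⟩
      refine ⟨cfun, hfun2, ?_, ?_⟩
      · rw [eq_top_iff, ← cv.span_eq]
        apply Submodule.span_le.mpr
        rintro x ⟨i, rfl⟩
        by_cases h2 : i = j₀
        · rw [h2, ← hecv, ← hcj₀]
          exact Submodule.subset_span ⟨j₀, rfl⟩
        · by_cases h1 : i = i₀
          · rw [h1, ← hfcv, ← hci₀]
            exact Submodule.subset_span ⟨i₀, rfl⟩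
          · exact hF'le (Submodule.subset_span ⟨⟨i, h1, h2⟩, rfl⟩)
      · intro j
        by_cases h2 : j = j₀
        · rw [h2, hcj₀, show δ e = f from rfl, ← hci₀]
          apply Submodule.subset_span
          refine ⟨i₀, ?_, rfl⟩
          show hfun2 i₀ < hfun2 j₀
          rw [hhi₀, hhj₀]
          omega
        · by_cases h1 : j = i₀
          · rw [h1, hci₀, hδf]
            exact Submodule.zero_mem _
          · rw [hcoth j h1 h2]
            set z : F' := c' ⟨j, h1, h2⟩ with hz
            have hdec : δ (z : F) = ↑(δ' z) + φ (δ (z : F)) • f := by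
              rw [hδ'apply, hπapply, hψδ, zero_smul, sub_zero]
              abel
            rw [hdec]
            apply Submodule.add_mem
            · have hp := hδprop' ⟨j, h1, h2⟩
              have h3 : (δ' z : F) ∈ Submodule.map F'.subtype
                  (Submodule.span R (c' '' {i | h' i < h' ⟨j, h1, h2⟩})) :=
                ⟨δ' z, hp, rfl⟩
              rw [Submodule.map_span] at h3
              refine Submodule.span_le.mpr ?_ h3
              rintro x ⟨y, ⟨i, hi, rfl⟩, rfl⟩
              apply Submodule.subset_span
              refine ⟨↑i, ?_, ?_⟩
              · show hfun2 ↑i < hfun2 j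
                rw [hhoth ↑i i.2.1 i.2.2, hhoth j h1 h2]
                exact Nat.add_lt_add_right hi 1
              · rw [hcoth ↑i i.2.1 i.2.2]
                rfl
            · apply Submodule.smul_mem
              apply Submodule.subset_span
              refine ⟨i₀, ?_, hci₀⟩
              show hfun2 i₀ < hfun2 j
              rw [hhi₀, hhoth j h1 h2]
              omega

/-- Let `R = k[x₁,…,x_d]` be ℤᵈ-graded and `F` a finitely generated ℤᵈ-graded free `R`-module
(homogeneous basis `b`, degrees `deg`) with a graded square-zero differential `δ` of degree
`dd ≤ 0` coordinatewise. Then `F` admits a free flag: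
a filtration `0 = F^{-1} ⊆ F^0 ⊆ F^1 ⊆ ⋯` with `δ(F^n) ⊆ F^{n-1}`, `∪ F^n = F`, and all
subquotients `F^n/F^{n-1}` free. -/
theorem free_flag_of_nonpos_degree
    (k : Type*) [Field k] (d : ℕ)
    (F : Type*) [AddCommGroup F] [Module (MvPolynomial (Fin d) k) F]
    (ι : Type*) [Fintype ι]
    (b : Module.Basis ι (MvPolynomial (Fin d) k) F)
    (deg : ι → Fin d → ℤ)
    (δ : F →ₗ[MvPolynomial (Fin d) k] F) (hsq : δ ∘ₗ δ = 0)
    (dd : Fin d → ℤ) (hdd : ∀ l, dd l ≤ 0)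
    -- δ is homogeneous of degree dd with respect to the grading determined by `deg`
    (hgr : ∀ i j, IsHomogeneousOfDeg (b.repr (δ (b j)) i)
      (fun l => deg j l + dd l - deg i l)) :
    ∃ Fl : ℕ → Submodule (MvPolynomial (Fin d) k) F,
      Monotone Fl ∧
      Submodule.map δ (Fl 0) = ⊥ ∧
      (∀ n, Submodule.map δ (Fl (n+1)) ≤ Fl n) ∧
      (⨆ n, Fl n) = ⊤ ∧
      Module.Free (MvPolynomial (Fin d) k) (Fl 0) ∧
      ∀ n, Module.Free (MvPolynomial (Fin d) k)
        ((Fl (n+1)) ⧸ (Submodule.comap (Fl (n+1)).subtype (Fl n))) := by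
  classical
  set R := MvPolynomial (Fin d) k with hR
  obtain ⟨c, h, hspan, hδprop⟩ :=
    key_lemma k d (Fintype.card ι) (le_refl _) b deg δ hsq dd hdd hgr
  haveI : Module.Finite R F := Module.Finite.of_basis b
  set T : F →ₗ[R] F := b.constr ℕ c with hT
  have hTb : ∀ i, T (b i) = c i := fun i => b.constr_basis ℕ c i
  have hTsurj : Function.Surjective T := by
    rw [← LinearMap.range_eq_top, eq_top_iff, ← hspan]
    apply Submodule.span_le.mpr
    rintro x ⟨i, rfl⟩
    exact ⟨b i, hTb i⟩
  have hTinj : Function.Injective T :=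
    OrzechProperty.injective_of_surjective_endomorphism T hTsurj
  set cB : Module.Basis ι R F := b.map (LinearEquiv.ofBijective T ⟨hTinj, hTsurj⟩) with hcB
  have hcBc : ⇑cB = c := funext fun i => by rw [hcB, Module.Basis.map_apply]; exact hTb i
  rw [← hcBc] at hspan
  simp only [← hcBc] at hδprop
  set Fl : ℕ → Submodule R F := fun n => Submodule.span R (⇑cB '' {i | h i ≤ n}) with hFl
  have hFln : ∀ n, Fl n = Submodule.span R (⇑cB '' {i | h i ≤ n}) := fun n => rfl
  refine ⟨Fl, ?_, ?_, ?_, ?_, ?_, ?_⟩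
  · -- monotone
    intro m n hmn
    rw [hFln, hFln]
    exact Submodule.span_mono (Set.image_mono fun i hi => le_trans hi hmn)
  · -- δ(F⁰) = 0
    rw [hFln, Submodule.map_span, eq_bot_iff]
    apply Submodule.span_le.mpr
    rintro x ⟨y, ⟨i, hi, rfl⟩, rfl⟩
    have hempty : {j | h j < h i} = (∅ : Set ι) := by
      ext j
      simp only [Set.mem_setOf_eq, Set.mem_empty_iff_false, iff_false, not_lt]
      have : h i ≤ 0 := hi
      omega
    have h0 := hδprop i
    rw [hempty, Set.image_empty, Submodule.span_empty, Submodule.mem_bot] at h0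
    rw [h0]
    simp
  · -- δ(Fⁿ⁺¹) ⊆ Fⁿ
    intro n
    rw [hFln, hFln, Submodule.map_span]
    apply Submodule.span_le.mpr
    rintro x ⟨y, ⟨i, hi, rfl⟩, rfl⟩
    have h0 := hδprop i
    have hsub : ⇑cB '' {j | h j < h i} ⊆ ⇑cB '' {j | h j ≤ n} := by
      apply Set.image_mono
      intro j hj
      have h1 : h j < h i := hj
      have h2 : h i ≤ n + 1 := hi
      show h j ≤ n
      omega
    exact Submodule.span_le.mpr (le_trans hsub Submodule.subset_span) h0
  · -- exhaustive
    rw [eq_top_iff, ← hspan]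
    apply Submodule.span_le.mpr
    rintro x ⟨i, rfl⟩
    have hmem : cB i ∈ Fl (h i) :=
      Submodule.subset_span ⟨i, show h i ≤ h i from le_refl _, rfl⟩
    exact Submodule.mem_iSup_of_mem (h i) hmem
  · -- F⁰ free
    rw [hFln, Set.image_eq_range]
    exact Module.Free.of_basis (Module.Basis.span (cB.linearIndependent.comp _ Subtype.val_injective))
  · -- subquotients free
    intro n
    have hsetsplit : {i | h i ≤ n+1} = {i | h i ≤ n} ∪ {i | h i = n+1} := by
      ext i
      simp only [Set.mem_setOf_eq, Set.mem_union]
      omega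
    set A := Submodule.span R (⇑cB '' {i | h i ≤ n}) with hA
    set B := Submodule.span R (⇑cB '' {i | h i = n+1}) with hB
    have hFl1AB : Fl (n+1) = A ⊔ B := by
      rw [hFln, hsetsplit, Set.image_union, Submodule.span_union]
    have hAle : A ≤ Fl (n+1) := by rw [hFl1AB]; exact le_sup_left
    have hBle : B ≤ Fl (n+1) := by rw [hFl1AB]; exact le_sup_right
    have hdisj : Disjoint A B := by
      apply cB.linearIndependent.disjoint_span_image
      rw [Set.disjoint_left]
      intro i hi1 hi2
      have h1 : h i ≤ n := hi1
      have h2 : h i = n + 1 := hi2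
      omega
    have hcompl : IsCompl (Submodule.comap (Fl (n+1)).subtype A)
        (Submodule.comap (Fl (n+1)).subtype B) := by
      constructor
      · rw [disjoint_iff, eq_bot_iff]
        rintro z ⟨hz1, hz2⟩
        have hz0 : (z : F) = 0 := Submodule.disjoint_def.mp hdisj _ hz1 hz2
        exact (Submodule.mem_bot _).mpr (Subtype.ext hz0)
      · rw [codisjoint_iff, eq_top_iff]
        intro z _
        have hz : (z : F) ∈ A ⊔ B := by rw [← hFl1AB]; exact z.2
        obtain ⟨a, ha, bb, hbb, hab⟩ := Submodule.mem_sup.mp hz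
        refine Submodule.mem_sup.mpr ⟨⟨a, hAle ha⟩, ha, ⟨bb, hBle hbb⟩, hbb, ?_⟩
        exact Subtype.ext hab
    haveI hfreeB : Module.Free R B := by
      rw [hB, Set.image_eq_range]
      exact Module.Free.of_basis (Module.Basis.span (cB.linearIndependent.comp _ Subtype.val_injective))
    have e1 := Submodule.quotientEquivOfIsCompl _ _ hcompl
    have e2 := Submodule.comapSubtypeEquivOfLe hBle
    exact Module.Free.of_equiv ((e1.trans e2).symm)
end

section
/- Let R = k[x₁,…,x_d] be the ℤᵈ-graded polynomial ring over a field k, and F a finitely generated ℤᵈ-graded R-module which is free over R, equipped with a square-zero R-linear endomorphism δ homogeneous of degree 0 ∈ ℤᵈ. If H(F) = ker δ / im δ is nonzero and of finite length as an R-module, then rank_R F ≥ 2^d. -/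
set_option synthInstance.maxHeartbeats 1000000

open LinearMap MvPolynomial

namespace ABI

section Core

variable {k : Type*} [Field k] {ι : Type*} [DecidableEq ι] {Dir : Type*}

/-- pointwise dominance order on labels -/
def pLE (X : ι → Dir → ℤ) (i j : ι) : Prop := ∀ l, X i l ≤ X j l

variable [Fintype ι]

/-- compression of the matrix `C` to the coordinate set `S`, acting on vectors. -/
def Dop (C : ι → ι → k) (S : Finset ι) (v : ι → k) : ι → k :=
  fun i => if i ∈ S then ∑ j ∈ S, C i j * v j else 0

/-- exactness of the compressed differential on the coordinate subspace `S`. -/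
def IsExact (C : ι → ι → k) (S : Finset ι) : Prop :=
  ∀ v : ι → k, (∀ i, i ∉ S → v i = 0) → Dop C S v = 0 → ∃ w, Dop C S w = v

/-- order convexity of a coordinate set -/
def OConvex (X : ι → Dir → ℤ) (S : Finset ι) : Prop :=
  ∀ i p j, i ∈ S → j ∈ S → pLE X i p → pLE X p j → p ∈ S

variable {X : ι → Dir → ℤ} {C : ι → ι → k}

lemma Dop_support (S : Finset ι) (v : ι → k) : ∀ i, i ∉ S → Dop C S v i = 0 := by
  intro i hi; simp [Dop, hi]

lemma Dop_proj (S : Finset ι) (v : ι → k) :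
    Dop C S (fun i => if i ∈ S then v i else 0) = Dop C S v := by
  funext i
  simp only [Dop]
  split
  · refine Finset.sum_congr rfl fun j hj => by simp [hj]
  · rfl

lemma Dop_sub (S : Finset ι) (a b : ι → k) :
    Dop C S (a - b) = Dop C S a - Dop C S b := by
  funext i
  simp only [Dop, Pi.sub_apply]
  split
  · rw [← Finset.sum_sub_distrib]
    exact Finset.sum_congr rfl fun j _ => by ring
  · rw [sub_zero]

/-- L1 : the compression to an order convex set is square-zero -/
lemma Dop_sq (hC : ∀ i j, C i j ≠ 0 → pLE X i j)
    (hsq : ∀ i j, ∑ p, C i p * C p j = 0)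
    {S : Finset ι} (hS : OConvex X S) (v : ι → k) :
    Dop C S (Dop C S v) = 0 := by
  funext i
  simp only [Dop]
  split
  case isFalse => rfl
  case isTrue hi =>
    have : ∀ p ∈ S, C i p * (if p ∈ S then ∑ j ∈ S, C p j * v j else 0)
        = ∑ j ∈ S, C i p * C p j * v j := by
      intro p hp
      rw [if_pos hp, Finset.mul_sum]
      exact Finset.sum_congr rfl fun j _ => by ring
    rw [Finset.sum_congr rfl this, Finset.sum_comm]
    have : ∀ j ∈ S, ∑ p ∈ S, C i p * C p j * v j = 0 := by
      intro j hj
      have hext : ∑ p ∈ S, C i p * C p j = ∑ p, C i p * C p j := by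
        apply Finset.sum_subset (Finset.subset_univ S)
        intro p _ hp
        by_contra hne
        have h1 : C i p ≠ 0 := fun h => hne (by simp [h])
        have h2 : C p j ≠ 0 := fun h => hne (by simp [h])
        exact hp (hS i p j hi hj (hC _ _ h1) (hC _ _ h2))
      rw [← Finset.sum_mul, hext, hsq, zero_mul]
    rw [Finset.sum_congr rfl this]
    simp

/-- L2 : for `v` supported on a relatively down-closed subset `L ⊆ U`,
the compressions to `L` and to `U` agree. -/
lemma Dop_down {L U : Finset ι} (hLU : L ⊆ U)
    (hC : ∀ i j, C i j ≠ 0 → pLE X i j)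
    (hDC : ∀ i ∈ U, ∀ j ∈ L, pLE X i j → i ∈ L)
    (v : ι → k) (hv : ∀ i, i ∉ L → v i = 0) :
    Dop C U v = Dop C L v := by
  funext i
  simp only [Dop]
  have hsum : ∑ j ∈ U, C i j * v j = ∑ j ∈ L, C i j * v j := by
    symm
    apply Finset.sum_subset hLU
    intro j _ hj; rw [hv j hj, mul_zero]
  by_cases hiU : i ∈ U
  · rw [if_pos hiU, hsum]
    by_cases hiL : i ∈ L
    · rw [if_pos hiL]
    · rw [if_neg hiL]
      apply Finset.sum_eq_zero
      intro j hj
      rcases eq_or_ne (C i j) 0 with h | h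
      · rw [h, zero_mul]
      · exact absurd (hDC i hiU j hj (hC _ _ h)) hiL
  · rw [if_neg hiU, if_neg (fun h => hiU (hLU h))]

/-- L3' : compression to the "high part" `U \ L` is the projection of the compression to `U`. -/
lemma Dop_high {L U : Finset ι} (hC : ∀ i j, C i j ≠ 0 → pLE X i j)
    (hDC : ∀ i ∈ U, ∀ j ∈ L, pLE X i j → i ∈ L)
    (w : ι → k) (hw : ∀ i, i ∉ U → w i = 0) :
    ∀ i ∈ U \ L, Dop C (U \ L) w i = Dop C U w i := by
  intro i hi
  have hiU : i ∈ U := (Finset.mem_sdiff.1 hi).1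
  have hiL : i ∉ L := (Finset.mem_sdiff.1 hi).2
  simp only [Dop, if_pos hi, if_pos hiU]
  apply Finset.sum_subset (Finset.sdiff_subset)
  intro j hjU hj
  have hjL : j ∈ L := by
    by_contra h
    exact hj (Finset.mem_sdiff.2 ⟨hjU, h⟩)
  rcases eq_or_ne (C i j) 0 with h | h
  · rw [h, zero_mul]
  · exact absurd (hDC i hiU j hjL (hC _ _ h)) hiL

end Core

section Core2

set_option linter.unusedSectionVars false

variable {k : Type*} [Field k] {ι : Type*} [DecidableEq ι] [Fintype ι] {Dir : Type*}
variable {X : ι → Dir → ℤ} {C : ι → ι → k}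

/-- an exactness witness can be chosen supported on `S` -/
lemma IsExact.elim' {S : Finset ι} (hS : IsExact C S) (v : ι → k)
    (hv : ∀ i, i ∉ S → v i = 0) (hcyc : Dop C S v = 0) :
    ∃ w, (∀ i, i ∉ S → w i = 0) ∧ Dop C S w = v := by
  obtain ⟨w, hw⟩ := hS v hv hcyc
  refine ⟨fun i => if i ∈ S then w i else 0, fun i hi => by simp [hi], ?_⟩
  rw [Dop_proj, hw]

/-- KEY chase 1 : exactness of the low part and the ambient implies exactness of the high part. -/
lemma exact_high (hC : ∀ i j, C i j ≠ 0 → pLE X i j)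
    (hsq : ∀ i j, ∑ p, C i p * C p j = 0)
    {L U : Finset ι} (hLU : L ⊆ U)
    (hUc : OConvex X U) (hLc : OConvex X L)
    (hDC : ∀ i ∈ U, ∀ j ∈ L, pLE X i j → i ∈ L)
    (hU : IsExact C U) (hL : IsExact C L) : IsExact C (U \ L) := by
  intro v hv hcyc
  set H := U \ L with hH
  have hvU : ∀ i, i ∉ U → v i = 0 := by
    intro i hi
    apply hv; rw [hH, Finset.mem_sdiff]; tauto
  -- u₀ := Dop U v is supported on L
  set u₀ := Dop C U v with hu₀
  have hu₀L : ∀ i, i ∉ L → u₀ i = 0 := by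
    intro i hi
    by_cases hiU : i ∈ U
    · by_cases hiH : i ∈ H
      · have := Dop_high (L := L) (U := U) hC hDC v hvU i hiH
        have h2 : Dop C H v i = 0 := by rw [hcyc]; rfl
        rw [hu₀, ← this, h2]
      · exact absurd (Finset.mem_sdiff.2 ⟨hiU, hi⟩) hiH
    · exact Dop_support U v i hiU
  have hu₀cyc : Dop C L u₀ = 0 := by
    rw [← Dop_down hLU hC hDC u₀ hu₀L, hu₀, Dop_sq hC hsq hUc]
  obtain ⟨u, huL, hu⟩ := hL.elim' u₀ hu₀L hu₀cyc
  -- v - u is a cycle in U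
  have huU : ∀ i, i ∉ U → u i = 0 := fun i hi => huL i (fun h => hi (hLU h))
  have hvuU : ∀ i, i ∉ U → (v - u) i = 0 := by
    intro i hi; simp [hvU i hi, huU i hi]
  have hDopu : Dop C U u = u₀ := by rw [Dop_down hLU hC hDC u huL, hu]
  have hcycU : Dop C U (v - u) = 0 := by
    rw [Dop_sub, ← hu₀, hDopu, sub_self]
  obtain ⟨w, hwU, hw⟩ := hU.elim' (v - u) hvuU hcycU
  -- the high projection of w works
  refine ⟨w, ?_⟩
  funext i
  by_cases hiH : i ∈ H
  · rw [Dop_high (L := L) (U := U) hC hDC w hwU i hiH, hw]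
    have : u i = 0 := huL i (Finset.mem_sdiff.1 hiH).2
    simp [this]
  · rw [Dop_support _ _ _ hiH, hv i hiH]

/-- KEY chase 2 : exactness of the high part and the ambient implies exactness of the low part. -/
lemma exact_low (hC : ∀ i j, C i j ≠ 0 → pLE X i j)
    (hsq : ∀ i j, ∑ p, C i p * C p j = 0)
    {L U : Finset ι} (hLU : L ⊆ U)
    (hUc : OConvex X U) (hHc : OConvex X (U \ L))
    (hDC : ∀ i ∈ U, ∀ j ∈ L, pLE X i j → i ∈ L)
    (hU : IsExact C U) (hH : IsExact C (U \ L)) : IsExact C L := by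
  intro v hv hcyc
  set H := U \ L with hHdef
  have hvU : ∀ i, i ∉ U → v i = 0 := fun i hi => hv i (fun h => hi (hLU h))
  have hcycU : Dop C U v = 0 := by rw [Dop_down hLU hC hDC v hv, hcyc]
  obtain ⟨w, hwU, hw⟩ := hU.elim' v hvU hcycU
  -- the high part of w is a cycle for the high compression
  set wH : ι → k := fun i => if i ∈ H then w i else 0 with hwH
  have hwHsupp : ∀ i, i ∉ H → wH i = 0 := fun i hi => by simp [hwH, hi]
  have hwHcyc : Dop C H wH = 0 := by
    funext i
    by_cases hiH : i ∈ H
    · have h1 : Dop C H wH i = Dop C H w i := by rw [hwH, Dop_proj]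
      rw [h1, Dop_high (L := L) (U := U) hC hDC w hwU i hiH, hw]
      have : v i = 0 := hv i (Finset.mem_sdiff.1 hiH).2
      rw [this]; rfl
    · rw [Dop_support _ _ _ hiH]; rfl
  obtain ⟨u, huH, hu⟩ := hH.elim' wH hwHsupp hwHcyc
  -- w' := w - Dop U u is supported on L and maps to v
  have huU : ∀ i, i ∉ U → u i = 0 := fun i hi =>
    huH i (fun h => hi (Finset.mem_sdiff.1 h).1)
  set w' : ι → k := w - Dop C U u with hw'
  have hw'U : ∀ i, i ∉ U → w' i = 0 := by
    intro i hi
    simp [hw', hwU i hi, Dop_support U u i hi]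
  have hDopw' : Dop C U w' = v := by
    rw [hw', Dop_sub, hw, Dop_sq hC hsq hUc, sub_zero]
  have hw'L : ∀ i, i ∉ L → w' i = 0 := by
    intro i hi
    by_cases hiU : i ∈ U
    · have hiH : i ∈ H := Finset.mem_sdiff.2 ⟨hiU, hi⟩
      have : Dop C U u i = Dop C H u i := by
        rw [Dop_high (L := L) (U := U) hC hDC u huU i hiH]
      simp only [hw', Pi.sub_apply, this, hu]
      have hwi : wH i = w i := by rw [hwH]; simp [hiH]
      rw [hwi, sub_self]
    · exact hw'U i hiU
  refine ⟨w', ?_⟩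
  rw [← Dop_down hLU hC hDC w' hw'L, hDopw']

end Core2

section Core3

set_option linter.unusedSectionVars false

variable {k : Type*} [Field k] {ι : Type*} [DecidableEq ι] [Fintype ι]
variable {Dir : Type*} [DecidableEq Dir]

/-- the slice of `A` determined by constraining directions in `D'` to be `≤ e`. -/
def Sl (X : ι → Dir → ℤ) (A : Finset ι) (D' : Finset Dir) (e : Dir → ℤ) : Finset ι :=
  A.filter (fun i => ∀ l ∈ D', X i l ≤ e l)

variable {X : ι → Dir → ℤ} {C : ι → ι → k}

lemma mem_Sl {A : Finset ι} {D' : Finset Dir} {e : Dir → ℤ} {i : ι} :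
    i ∈ Sl X A D' e ↔ i ∈ A ∧ ∀ l ∈ D', X i l ≤ e l := by
  simp [Sl]

lemma OConvex_filter_down (hA : OConvex X A) (P : ι → Prop) [DecidablePred P]
    (hP : ∀ i j, pLE X i j → P j → P i) : OConvex X (A.filter P) := by
  intro i p j hi hj h1 h2
  rw [Finset.mem_filter] at *
  exact ⟨hA i p j hi.1 hj.1 h1 h2, hP p j h2 hj.2⟩

lemma OConvex_filter_up (hA : OConvex X A) (P : ι → Prop) [DecidablePred P]
    (hP : ∀ i j, pLE X i j → P i → P j) : OConvex X (A.filter P) := by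
  intro i p j hi hj h1 h2
  rw [Finset.mem_filter] at *
  exact ⟨hA i p j hi.1 hj.1 h1 h2, hP i p h1 hi.2⟩

lemma OConvex_Sl (hA : OConvex X A) (D' : Finset Dir) (e : Dir → ℤ) :
    OConvex X (Sl X A D' e) :=
  OConvex_filter_down hA _ (fun i j hij hj l hl => le_trans (hij l) (hj l hl))

lemma IsExact_empty : IsExact C (∅ : Finset ι) := by
  intro v hv _
  refine ⟨0, ?_⟩
  funext i
  rw [Dop]
  simp [hv i (Finset.notMem_empty i)]

theorem core (hC : ∀ i j, C i j ≠ 0 → pLE X i j)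
    (hsq : ∀ i j, ∑ p, C i p * C p j = 0) :
    ∀ (n : ℕ) (D : Finset Dir) (A : Finset ι), D.card = n → OConvex X A →
    (∀ D' : Finset Dir, D' ⊂ D → ∀ e : Dir → ℤ, IsExact C (Sl X A D' e)) →
    (∃ e₀, ¬ IsExact C (Sl X A D e₀)) → 2 ^ n ≤ A.card := by
  intro n
  induction n with
  | zero =>
    intro D A hD _ _ hnz
    obtain ⟨e₀, he₀⟩ := hnz
    rw [Finset.card_eq_zero] at hD
    subst hD
    have hSA : Sl X A ∅ e₀ = A := by
      apply Finset.ext; intro i; simp [mem_Sl]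
    rw [hSA] at he₀
    rcases Finset.eq_empty_or_nonempty A with h | h
    · exact absurd (h ▸ IsExact_empty) he₀
    · simpa using Finset.card_pos.2 h
  | succ n ih =>
    intro D A hD hAc hvan hnz
    obtain ⟨e₀, he₀⟩ := hnz
    have hDne : D.Nonempty := by
      rw [← Finset.card_pos, hD]; omega
    obtain ⟨l₀, hl₀⟩ := hDne
    set m : ℤ := e₀ l₀ with hm
    set P : ι → Prop := fun i => X i l₀ ≤ m with hP
    have hPdec : DecidablePred P := fun i => by rw [hP]; infer_instance
    set Alow : Finset ι := A.filter P with hAlow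
    set Ahigh : Finset ι := A.filter (fun i => ¬ P i) with hAhigh
    have hcard : Alow.card + Ahigh.card = A.card :=
      Finset.card_filter_add_card_filter_not P
    have hDer : (D.erase l₀).card = n := by
      rw [Finset.card_erase_of_mem hl₀, hD]; omega
    -- the update of e at l₀ by m
    have hupd : ∀ e : Dir → ℤ, ∀ D'' : Finset Dir, l₀ ∉ D'' →
        Sl X A (insert l₀ D'') (Function.update e l₀ m)
          = (Sl X A D'' e).filter P := by
      intro e D'' hl
      apply Finset.ext; intro i
      simp only [mem_Sl, Finset.mem_filter, Finset.mem_insert]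
      constructor
      · rintro ⟨hiA, h⟩
        have h0 := h l₀ (Or.inl rfl)
        rw [Function.update_self] at h0
        refine ⟨⟨hiA, fun l hl' => ?_⟩, h0⟩
        have h2 := h l (Or.inr hl')
        have hne : l ≠ l₀ := by rintro rfl; exact hl hl'
        rwa [Function.update_of_ne hne m e] at h2
      · rintro ⟨⟨hiA, h⟩, h0⟩
        refine ⟨hiA, fun l hl' => ?_⟩
        rcases hl' with rfl | hl'
        · rwa [Function.update_self]
        · have hne : l ≠ l₀ := by rintro rfl; exact hl hl'
          rw [Function.update_of_ne hne m e]
          exact h l hl'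
    -- low slices are slices of A with one more constrained direction
    have hSlow : ∀ (D'' : Finset Dir) (e : Dir → ℤ), D'' ⊆ D.erase l₀ →
        Sl X Alow D'' e = Sl X A (insert l₀ D'') (Function.update e l₀ m) := by
      intro D'' e hD''
      rw [hupd e D'' (fun h => (Finset.mem_erase.1 (hD'' h)).1 rfl)]
      apply Finset.ext; intro i
      simp only [mem_Sl, Finset.mem_filter, hAlow]
      tauto
    -- high slices are differences
    have hShigh : ∀ (D'' : Finset Dir) (e : Dir → ℤ), D'' ⊆ D.erase l₀ →
        Sl X Ahigh D'' e
          = Sl X A D'' e \ Sl X A (insert l₀ D'') (Function.update e l₀ m) := by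
      intro D'' e hD''
      rw [hupd e D'' (fun h => (Finset.mem_erase.1 (hD'' h)).1 rfl)]
      apply Finset.ext; intro i
      simp only [mem_Sl, Finset.mem_filter, Finset.mem_sdiff, hAhigh]
      tauto
    -- properness of insert l₀ D'' in D, for D'' ⊂ D.erase l₀
    have hproper : ∀ D'' : Finset Dir, D'' ⊂ D.erase l₀ → insert l₀ D'' ⊂ D := by
      intro D'' hD''
      have hsub : insert l₀ D'' ⊆ D :=
        Finset.insert_subset hl₀ (le_trans hD''.1 (Finset.erase_subset l₀ D))
      refine Finset.ssubset_iff_subset_ne.2 ⟨hsub, ?_⟩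
      intro h
      have h1 : D''.card < n := hDer ▸ Finset.card_lt_card hD''
      have h2 : (insert l₀ D'').card ≤ D''.card + 1 := Finset.card_insert_le _ _
      rw [h, hD] at h2
      omega
    -- the sets appearing in the key lemma
    have hLUfacts : ∀ (D'' : Finset Dir) (e : Dir → ℤ), D'' ⊆ D.erase l₀ →
        (Sl X A (insert l₀ D'') (Function.update e l₀ m) ⊆ Sl X A D'' e)
        ∧ (∀ i ∈ Sl X A D'' e, ∀ j ∈ Sl X A (insert l₀ D'') (Function.update e l₀ m),
            pLE X i j → i ∈ Sl X A (insert l₀ D'') (Function.update e l₀ m))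
        ∧ OConvex X (Sl X A D'' e \ Sl X A (insert l₀ D'') (Function.update e l₀ m)) := by
      intro D'' e hD''
      have hl : l₀ ∉ D'' := fun h => (Finset.mem_erase.1 (hD'' h)).1 rfl
      rw [hupd e D'' hl]
      have hsd : Sl X A D'' e \ (Sl X A D'' e).filter P
          = (Sl X A D'' e).filter (fun i => ¬ P i) := by
        apply Finset.ext; intro i
        simp only [Finset.mem_sdiff, Finset.mem_filter]
        tauto
      refine ⟨Finset.filter_subset _ _, ?_, ?_⟩
      · intro i hi j hj hij
        rw [Finset.mem_filter] at hj ⊢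
        exact ⟨hi, le_trans (hij l₀) hj.2⟩
      · rw [hsd]
        exact OConvex_filter_up (OConvex_Sl hAc _ _) _
          (fun i j hij hi hj => hi (le_trans (hij l₀) hj))
    -- induction hypothesis applied to the low part
    have hlowcard : 2 ^ n ≤ Alow.card := by
      apply ih (D.erase l₀) Alow hDer
      · exact OConvex_filter_down hAc _ (fun i j hij hj => le_trans (hij l₀) hj)
      · intro D'' hD'' e
        rw [hSlow D'' e hD''.1]
        exact hvan _ (hproper D'' hD'') _
      · refine ⟨e₀, ?_⟩
        rw [hSlow (D.erase l₀) e₀ subset_rfl, Finset.insert_erase hl₀, hm,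
          Function.update_eq_self]
        exact he₀
    -- induction hypothesis applied to the high part
    have hhighcard : 2 ^ n ≤ Ahigh.card := by
      apply ih (D.erase l₀) Ahigh hDer
      · exact OConvex_filter_up hAc _ (fun i j hij hi hj => hi (le_trans (hij l₀) hj))
      · intro D'' hD'' e
        rw [hShigh D'' e hD''.1]
        obtain ⟨hLU, hDC, _⟩ := hLUfacts D'' e hD''.1
        exact exact_high hC hsq hLU (OConvex_Sl hAc _ _) (OConvex_Sl hAc _ _) hDC
          (hvan _ (Finset.ssubset_of_ssubset_of_subset hD'' (Finset.erase_subset l₀ D)) e)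
          (hvan _ (hproper D'' hD'') _)
      · refine ⟨e₀, ?_⟩
        rw [hShigh (D.erase l₀) e₀ subset_rfl]
        obtain ⟨hLU, hDC, hHc⟩ := hLUfacts (D.erase l₀) e₀ subset_rfl
        intro hEx
        have hexL := exact_low hC hsq hLU (OConvex_Sl hAc _ _) hHc hDC
          (hvan _ (Finset.erase_ssubset hl₀) e₀) hEx
        rw [Finset.insert_erase hl₀, hm, Function.update_eq_self] at hexL
        exact he₀ hexL
    calc 2 ^ (n + 1) = 2 ^ n + 2 ^ n := by ring
    _ ≤ Alow.card + Ahigh.card := Nat.add_le_add hlowcard hhighcard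
    _ = A.card := hcard

end Core3


section Transfer

open MvPolynomial

set_option linter.unusedSectionVars false

variable {k : Type*} [Field k] {d : ℕ} {F : Type*} [AddCommGroup F]
  [Module (MvPolynomial (Fin d) k) F] {ι : Type*} [Fintype ι] [DecidableEq ι]

/-- truncation of an integer exponent vector to a natural one -/
noncomputable def toN (u : Fin d → ℤ) : Fin d →₀ ℕ :=
  Finsupp.equivFunOnFinite.symm (fun l => (u l).toNat)

lemma toN_apply (u : Fin d → ℤ) (l : Fin d) : toN u l = (u l).toNat := rfl

variable (b : Module.Basis ι (MvPolynomial (Fin d) k) F) (deg : ι → Fin d → ℤ)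

/-- the multidegree-`e` component of `x ∈ F`, in coordinates -/
noncomputable def ccomp (e : Fin d → ℤ) (x : F) : ι → k :=
  fun i => if ∀ l, deg i l ≤ e l then coeff (toN fun l => e l - deg i l) (b.repr x i) else 0

lemma comp_add (e : Fin d → ℤ) (x y : F) :
    ccomp b deg e (x + y) = ccomp b deg e x + ccomp b deg e y := by
  funext i
  simp only [ccomp, map_add, Finsupp.add_apply, coeff_add, Pi.add_apply]
  split <;> simp

lemma comp_sub (e : Fin d → ℤ) (x y : F) :
    ccomp b deg e (x - y) = ccomp b deg e x - ccomp b deg e y := by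
  funext i
  simp only [ccomp, map_sub, Finsupp.sub_apply, coeff_sub, Pi.sub_apply]
  split <;> simp

lemma comp_sum {α : Type*} (e : Fin d → ℤ) (s : Finset α) (f : α → F) :
    ccomp b deg e (∑ a ∈ s, f a) = ∑ a ∈ s, ccomp b deg e (f a) := by
  classical
  induction s using Finset.induction with
  | empty =>
    funext i; simp [ccomp]
  | insert _ _ hnot ih =>
    rw [Finset.sum_insert hnot, Finset.sum_insert hnot, comp_add, ih]

/-- reconstruction: if all components vanish, the element is zero. -/
lemma comp_eq_zero_inj (x : F) (h : ∀ e, ccomp b deg e x = 0) : x = 0 := by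
  have hrepr : ∀ i, b.repr x i = 0 := by
    intro i
    apply MvPolynomial.ext
    intro mo
    have := congrFun (h (fun l => deg i l + mo l)) i
    rw [ccomp, if_pos (fun l => by omega)] at this
    have hm : (toN fun l => deg i l + (mo l : ℤ) - deg i l) = mo := by
      apply Finsupp.ext; intro l
      rw [toN_apply]
      omega
    rw [hm] at this
    simpa using this
  have : b.repr x = 0 := Finsupp.ext hrepr
  have := congrArg b.repr.symm this
  simpa using this

/-- the matrix of the differential in multigraded coordinates -/
noncomputable def Cm (δ : F →ₗ[MvPolynomial (Fin d) k] F) : ι → ι → k :=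
  fun i j => ccomp b deg (deg j) (δ (b j)) i

/-- convenience: full matrix-vector action -/
noncomputable def Cmul (δ : F →ₗ[MvPolynomial (Fin d) k] F) (v : ι → k) : ι → k :=
  fun i => ∑ j, Cm b deg δ i j * v j

lemma Cm_compat (δ : F →ₗ[MvPolynomial (Fin d) k] F) (i j : ι)
    (h : Cm b deg δ i j ≠ 0) : pLE deg i j := by
  by_contra hc
  apply h
  rw [Cm, ccomp]
  exact if_neg (fun hh => hc hh)

end Transfer

section Transfer2

open MvPolynomial

set_option linter.unusedSectionVars false

variable {k : Type*} [Field k] {d : ℕ} {F : Type*} [AddCommGroup F]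
  [Module (MvPolynomial (Fin d) k) F] {ι : Type*} [Fintype ι] [DecidableEq ι]
variable (b : Module.Basis ι (MvPolynomial (Fin d) k) F) (deg : ι → Fin d → ℤ)
variable (δ : F →ₗ[MvPolynomial (Fin d) k] F)

lemma comp_zero' (e : Fin d → ℤ) : ccomp b deg e (0 : F) = 0 := by
  funext i; simp [ccomp]

/-- the representation of `δ` on basis vectors is monomial -/
lemma repr_delta_basis
    (hgr : ∀ i j, IsHomogeneousOfDeg (b.repr (δ (b j)) i) (fun l => deg j l - deg i l))
    (i j : ι) :
    b.repr (δ (b j)) i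
      = monomial (toN fun l => deg j l - deg i l) (Cm b deg δ i j) := by
  rcases hgr i j with h0 | ⟨c, mo, hmo, hp⟩
  · have hC : Cm b deg δ i j = 0 := by
      rw [Cm, ccomp, h0]
      split <;> simp
    rw [h0, hC, map_zero]
  · have hle : ∀ l, deg i l ≤ deg j l := by
      intro l
      have h : (mo l : ℤ) = deg j l - deg i l := hmo l
      omega
    have htoN : (toN fun l => deg j l - deg i l) = mo := by
      apply Finsupp.ext; intro l
      rw [toN_apply]
      have h : (mo l : ℤ) = deg j l - deg i l := hmo l
      omega
    have hC : Cm b deg δ i j = c := by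
      rw [Cm, ccomp, if_pos hle, hp, htoN, coeff_monomial, if_pos rfl]
    rw [hp, hC, htoN]

/-- KEY commutation : taking components intertwines `δ` with the matrix `Cm`. -/
lemma comp_delta
    (hgr : ∀ i j, IsHomogeneousOfDeg (b.repr (δ (b j)) i) (fun l => deg j l - deg i l))
    (e : Fin d → ℤ) (x : F) :
    ccomp b deg e (δ x) = Cmul b deg δ (ccomp b deg e x) := by
  funext i
  have h1 : δ x = ∑ j, b.repr x j • δ (b j) := by
    conv_lhs => rw [← b.sum_repr x]
    rw [map_sum]
    exact Finset.sum_congr rfl fun j _ => (δ.map_smul _ _)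
  have hrepr : b.repr (δ x) i = ∑ j, b.repr x j * (b.repr (δ (b j)) i) := by
    rw [h1, map_sum, Finset.sum_apply']
    exact Finset.sum_congr rfl fun j _ => by
      rw [map_smul, Finsupp.smul_apply, smul_eq_mul]
  by_cases hie : ∀ l, deg i l ≤ e l
  · rw [ccomp, if_pos hie, hrepr, coeff_sum]
    rw [Cmul]
    refine Finset.sum_congr rfl fun j _ => ?_
    rw [repr_delta_basis b deg δ hgr i j, coeff_mul_monomial']
    by_cases hc : Cm b deg δ i j = 0
    · rw [hc]
      split <;> simp
    · have hij : pLE deg i j := Cm_compat b deg δ i j hc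
      by_cases hje : ∀ l, deg j l ≤ e l
      · have hcond : (toN fun l => deg j l - deg i l) ≤ (toN fun l => e l - deg i l) := by
          rw [Finsupp.le_def]
          intro l
          rw [toN_apply, toN_apply]
          have := hij l; have := hie l; have := hje l
          omega
        rw [if_pos hcond]
        have hsub : (toN fun l => e l - deg i l) - (toN fun l => deg j l - deg i l)
            = (toN fun l => e l - deg j l) := by
          apply Finsupp.ext; intro l
          rw [Finsupp.tsub_apply, toN_apply, toN_apply, toN_apply]
          have := hij l; have := hie l; have := hje l
          omega
        rw [hsub, ccomp, if_pos hje, mul_comm]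
      · push_neg at hje
        obtain ⟨l₁, hl₁⟩ := hje
        have hcond : ¬ (toN fun l => deg j l - deg i l) ≤ (toN fun l => e l - deg i l) := by
          rw [Finsupp.le_def]
          push_neg
          refine ⟨l₁, ?_⟩
          rw [toN_apply, toN_apply]
          have := hij l₁; have := hie l₁
          omega
        rw [if_neg hcond, ccomp, if_neg (fun h => absurd (h l₁) (not_le.2 hl₁))]
        simp
  · rw [ccomp, if_neg hie, Cmul]
    symm
    apply Finset.sum_eq_zero
    intro j _
    by_cases hc : Cm b deg δ i j = 0
    · rw [hc, zero_mul]
    · have hij : pLE deg i j := Cm_compat b deg δ i j hc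
      rw [ccomp]
      split
      next hje => exact absurd (fun l => le_trans (hij l) (hje l)) hie
      next => rw [mul_zero]

/-- the matrix `Cm` is square-zero -/
lemma Cm_sq
    (hgr : ∀ i j, IsHomogeneousOfDeg (b.repr (δ (b j)) i) (fun l => deg j l - deg i l))
    (hsq : δ ∘ₗ δ = 0) (i j : ι) :
    ∑ p, Cm b deg δ i p * Cm b deg δ p j = 0 := by
  have h0 : δ (δ (b j)) = 0 := by
    have := LinearMap.ext_iff.1 hsq (b j)
    simpa using this
  have h1 := congrFun (comp_delta b deg δ hgr (deg j) (δ (b j))) i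
  rw [h0, comp_zero'] at h1
  simpa [Cmul, Cm] using h1.symm

end Transfer2

section Transfer3

open MvPolynomial

set_option linter.unusedSectionVars false

variable {k : Type*} [Field k] {d : ℕ} {F : Type*} [AddCommGroup F]
  [Module (MvPolynomial (Fin d) k) F] {ι : Type*} [Fintype ι] [DecidableEq ι]
variable (b : Module.Basis ι (MvPolynomial (Fin d) k) F) (deg : ι → Fin d → ℤ)
variable (δ : F →ₗ[MvPolynomial (Fin d) k] F)

/-- build an element of `F` of multidegree `e` from coordinates -/
noncomputable def recon (e : Fin d → ℤ) (v : ι → k) : F :=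
  ∑ i, (monomial (toN fun l => e l - deg i l) (v i) : MvPolynomial (Fin d) k) • b i

lemma repr_recon (e : Fin d → ℤ) (v : ι → k) (i : ι) :
    b.repr (recon b deg e v) i = monomial (toN fun l => e l - deg i l) (v i) := by
  rw [recon, map_sum, Finset.sum_apply']
  rw [Finset.sum_eq_single i]
  · rw [map_smul, Finsupp.smul_apply, Module.Basis.repr_self, Finsupp.single_apply,
      if_pos rfl, smul_eq_mul, mul_one]
  · intro j _ hji
    rw [map_smul, Finsupp.smul_apply, Module.Basis.repr_self, Finsupp.single_apply,
      if_neg hji, smul_eq_mul, mul_zero]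
  · intro h
    exact absurd (Finset.mem_univ i) h

lemma comp_recon_self (e : Fin d → ℤ) (v : ι → k)
    (hv : ∀ i, ¬ (∀ l, deg i l ≤ e l) → v i = 0) :
    ccomp b deg e (recon b deg e v) = v := by
  funext i
  rw [ccomp]
  split
  next hie =>
    rw [repr_recon, coeff_monomial, if_pos rfl]
  next hie =>
    exact (hv i hie).symm

lemma comp_recon_ne (e e' : Fin d → ℤ) (v : ι → k) (hne : e' ≠ e)
    (hv : ∀ i, ¬ (∀ l, deg i l ≤ e l) → v i = 0) :
    ccomp b deg e' (recon b deg e v) = 0 := by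
  funext i
  rw [ccomp]
  split
  next hie' =>
    rw [repr_recon, coeff_monomial]
    split
    next heq =>
      by_cases hvi : v i = 0
      · exact hvi
      · exfalso
        have hie : ∀ l, deg i l ≤ e l := by
          by_contra hc
          exact hvi (hv i hc)
        apply hne
        funext l
        have h1 := DFunLike.congr_fun heq l
        rw [toN_apply, toN_apply] at h1
        have h2 := hie l
        have h3 := hie' l
        omega
    next => rfl
  next => rfl

/-- components of polynomial multiples of `recon` in too-small degrees vanish. -/
lemma comp_smul_recon (p : MvPolynomial (Fin d) k) (e e' : Fin d → ℤ) (v : ι → k)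
    (l₀ : Fin d) (hlt : e' l₀ < e l₀) (hbd : ∀ i, v i ≠ 0 → deg i l₀ ≤ e' l₀) :
    ccomp b deg e' (p • recon b deg e v) = 0 := by
  funext i
  rw [ccomp]
  split
  next hie' =>
    have hrepr : b.repr (p • recon b deg e v) i
        = p * monomial (toN fun l => e l - deg i l) (v i) := by
      rw [map_smul, Finsupp.smul_apply, smul_eq_mul, repr_recon]
    rw [hrepr, coeff_mul_monomial']
    split
    next hcond =>
      by_cases hvi : v i = 0
      · rw [hvi, mul_zero]; rfl
      · exfalso
        have h1 := hbd i hvi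
        have h2 := Finsupp.le_def.1 hcond l₀
        rw [toN_apply, toN_apply] at h2
        omega
    next => rfl
  next => rfl

/-- on vectors supported on a down-closed set, the full matrix action agrees with the
compression. -/
lemma Cmul_eq_Dop (S : Finset ι)
    (hdown : ∀ i j, pLE deg i j → j ∈ S → i ∈ S) (w : ι → k)
    (hw : ∀ i, i ∉ S → w i = 0) :
    Cmul b deg δ w = Dop (Cm b deg δ) S w := by
  funext i
  rw [Cmul, Dop]
  split
  next hi =>
    symm
    apply Finset.sum_subset (Finset.subset_univ S)
    intro j _ hj
    rw [hw j hj, mul_zero]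
  next hi =>
    apply Finset.sum_eq_zero
    intro j _
    by_cases hc : Cm b deg δ i j = 0
    · rw [hc, zero_mul]
    · by_cases hwj : w j = 0
      · rw [hwj, mul_zero]
      · exfalso
        have hjS : j ∈ S := by
          by_contra hjS
          exact hwj (hw j hjS)
        exact hi (hdown i j (Cm_compat b deg δ i j hc) hjS)

lemma Sl_downclosed (e : Fin d → ℤ) (D' : Finset (Fin d)) :
    ∀ i j, pLE deg i j → j ∈ Sl deg Finset.univ D' e → i ∈ Sl deg Finset.univ D' e := by
  intro i j hij hj
  rw [mem_Sl] at hj ⊢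
  exact ⟨Finset.mem_univ i, fun l hl => le_trans (hij l) (hj.2 l hl)⟩

end Transfer3

section Transfer4

open MvPolynomial

set_option linter.unusedSectionVars false
set_option maxHeartbeats 1000000

variable {k : Type*} [Field k] {d : ℕ} {F : Type*} [AddCommGroup F]
  [Module (MvPolynomial (Fin d) k) F] {ι : Type*} [Fintype ι] [DecidableEq ι]
variable (b : Module.Basis ι (MvPolynomial (Fin d) k) F) (deg : ι → Fin d → ℤ)
variable (δ : F →ₗ[MvPolynomial (Fin d) k] F)

lemma comp_supp (e : Fin d → ℤ) (x : F) (i : ι) (h : ¬ ∀ l, deg i l ≤ e l) :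
    ccomp b deg e x i = 0 := by
  rw [ccomp, if_neg h]

lemma mem_Sl_univ_univ {e : Fin d → ℤ} {i : ι} :
    i ∈ Sl deg Finset.univ Finset.univ e ↔ ∀ l, deg i l ≤ e l := by
  rw [mem_Sl]
  simp

/-- Transfer of nonvanishing homology. -/
lemma transfer_nonexact
    (hgr : ∀ i j, IsHomogeneousOfDeg (b.repr (δ (b j)) i) (fun l => deg j l - deg i l))
    (hH : ∃ x : F, δ x = 0 ∧ x ∉ LinearMap.range δ) :
    ∃ e₀ : Fin d → ℤ, ¬ IsExact (Cm b deg δ) (Sl deg Finset.univ Finset.univ e₀) := by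
  classical
  obtain ⟨x, hx0, hxr⟩ := hH
  by_contra hcon
  push_neg at hcon
  apply hxr
  set E : Finset (Fin d → ℤ) := Finset.univ.biUnion
    (fun i : ι => (b.repr x i).support.image (fun mo => fun l => deg i l + mo l)) with hE
  have hsupp : ∀ e : Fin d → ℤ, ccomp b deg e x ≠ 0 → e ∈ E := by
    intro e he
    obtain ⟨i, hi⟩ : ∃ i, ccomp b deg e x i ≠ 0 := by
      by_contra hc; push_neg at hc
      exact he (funext hc)
    have hie : ∀ l, deg i l ≤ e l := by
      by_contra hc
      exact hi (comp_supp b deg e x i hc)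
    rw [ccomp, if_pos hie] at hi
    rw [hE, Finset.mem_biUnion]
    refine ⟨i, Finset.mem_univ i, Finset.mem_image.2
      ⟨toN fun l => e l - deg i l, ?_, ?_⟩⟩
    · rwa [MvPolynomial.mem_support_iff]
    · funext l
      rw [toN_apply]
      have := hie l
      omega
  -- for each degree, a preimage of the component of x
  have hcyc : ∀ e : Fin d → ℤ, Dop (Cm b deg δ) (Sl deg Finset.univ Finset.univ e)
      (ccomp b deg e x) = 0 := by
    intro e
    have hsub : ∀ i, i ∉ Sl deg Finset.univ Finset.univ e → ccomp b deg e x i = 0 := by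
      intro i hi
      exact comp_supp b deg e x i (fun h => hi (mem_Sl_univ_univ deg |>.2 h))
    rw [← Cmul_eq_Dop b deg δ _ (Sl_downclosed deg e Finset.univ) _ hsub,
      ← comp_delta b deg δ hgr e x, hx0, comp_zero']
  have hw : ∀ e : Fin d → ℤ, ∃ w : ι → k,
      (∀ i, i ∉ Sl deg Finset.univ Finset.univ e → w i = 0) ∧
      Dop (Cm b deg δ) (Sl deg Finset.univ Finset.univ e) w = ccomp b deg e x := by
    intro e
    exact (hcon e).elim' (ccomp b deg e x)
      (fun i hi => comp_supp b deg e x i (fun h => hi (mem_Sl_univ_univ deg |>.2 h)))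
      (hcyc e)
  choose w hwsupp hwDop using hw
  have hwsupp' : ∀ e i, ¬ (∀ l, deg i l ≤ e l) → w e i = 0 := by
    intro e i h
    exact hwsupp e i (fun hmem => h ((mem_Sl_univ_univ deg).1 hmem))
  set y : F := ∑ e ∈ E, recon b deg e (w e) with hy
  have hkey : ∀ e' : Fin d → ℤ, ccomp b deg e' (δ y - x) = 0 := by
    intro e'
    rw [comp_sub]
    have hδy : ccomp b deg e' (δ y) = ccomp b deg e' x := by
      rw [hy, map_sum, comp_sum]
      have hterm : ∀ e ∈ E, ccomp b deg e' (δ (recon b deg e (w e)))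
          = Cmul b deg δ (ccomp b deg e' (recon b deg e (w e))) :=
        fun e _ => comp_delta b deg δ hgr e' _
      rw [Finset.sum_congr rfl hterm]
      by_cases he' : e' ∈ E
      · rw [Finset.sum_eq_single_of_mem e' he']
        · rw [comp_recon_self b deg e' (w e') (hwsupp' e'),
            Cmul_eq_Dop b deg δ _ (Sl_downclosed deg e' Finset.univ) _ (hwsupp e'),
            hwDop]
        · intro e _ hne
          rw [comp_recon_ne b deg e e' (w e) hne.symm (hwsupp' e)]
          have : Cmul b deg δ (0 : ι → k) = 0 := by
            funext i; rw [Cmul]; simp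
          rw [this]
      · have hzero : ∀ e ∈ E, Cmul b deg δ (ccomp b deg e' (recon b deg e (w e))) = 0 := by
          intro e heE
          have hne : e' ≠ e := fun h => he' (h ▸ heE)
          rw [comp_recon_ne b deg e e' (w e) hne (hwsupp' e)]
          funext i; rw [Cmul]; simp
        rw [Finset.sum_congr rfl hzero, Finset.sum_const_zero]
        by_contra hc
        exact he' (hsupp e' (fun h => hc h.symm))
    rw [hδy, sub_self]
  have h0 := comp_eq_zero_inj b deg _ hkey
  rw [sub_eq_zero] at h0
  exact LinearMap.mem_range.2 ⟨y, h0⟩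

end Transfer4

section Transfer5

open MvPolynomial

set_option linter.unusedSectionVars false
set_option maxHeartbeats 1000000

variable {k : Type*} [Field k] {d : ℕ} {F : Type*} [AddCommGroup F]
  [Module (MvPolynomial (Fin d) k) F] {ι : Type*} [Fintype ι] [DecidableEq ι]
variable (b : Module.Basis ι (MvPolynomial (Fin d) k) F) (deg : ι → Fin d → ℤ)
variable (δ : F →ₗ[MvPolynomial (Fin d) k] F)

/-- Transfer of finite length of the homology: all slices with a free direction are exact. -/
lemma transfer_vanish
    (hgr : ∀ i j, IsHomogeneousOfDeg (b.repr (δ (b j)) i) (fun l => deg j l - deg i l))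
    (hfl : IsFiniteLength (MvPolynomial (Fin d) k) (dHomology δ))
    (D' : Finset (Fin d)) (hD' : D' ⊂ Finset.univ) (e : Fin d → ℤ) :
    IsExact (Cm b deg δ) (Sl deg Finset.univ D' e) := by
  classical
  intro v hv hcyc
  set S := Sl deg Finset.univ D' e with hS
  obtain ⟨l₀, _, hl₀⟩ := Finset.exists_of_ssubset hD'
  set B : ℕ := Finset.univ.sup (fun i : ι => Finset.univ.sup (fun l : Fin d => (deg i l).toNat))
    with hB
  have hBle : ∀ (i : ι) (l : Fin d), deg i l ≤ (B : ℤ) := by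
    intro i l
    have h1 : (deg i l).toNat ≤ B := by
      rw [hB]
      exact le_trans
        (Finset.le_sup (f := fun l : Fin d => (deg i l).toNat) (Finset.mem_univ l))
        (Finset.le_sup (f := fun i : ι => Finset.univ.sup fun l : Fin d => (deg i l).toNat)
          (Finset.mem_univ i))
    calc deg i l ≤ ((deg i l).toNat : ℤ) := Int.self_le_toNat _
    _ ≤ (B : ℤ) := by exact_mod_cast h1
  set et : ℕ → Fin d → ℤ := fun t l => if l ∈ D' then e l else (B : ℤ) + t with het
  have hetdef : ∀ (t : ℕ) (l : Fin d), et t l = if l ∈ D' then e l else (B : ℤ) + t :=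
    fun t l => rfl
  have het_l₀ : ∀ t : ℕ, et t l₀ = (B : ℤ) + t := fun t => by
    rw [hetdef, if_neg hl₀]
  -- support of v relative to the degrees et t
  have hvet : ∀ t : ℕ, ∀ i, ¬ (∀ l, deg i l ≤ et t l) → v i = 0 := by
    intro t i h
    apply hv
    intro hmem
    apply h
    intro l
    rw [hetdef]
    split
    next hl => exact (mem_Sl.1 hmem).2 l hl
    next hl =>
      have := hBle i l
      have ht : (0 : ℤ) ≤ t := Int.ofNat_nonneg t
      omega
  have hSdown := Sl_downclosed deg e D'
  have hCv : Cmul b deg δ v = 0 := by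
    rw [Cmul_eq_Dop b deg δ S (hS ▸ hSdown) v hv]
    exact hcyc
  -- the cycles z t
  set z : ℕ → F := fun t => recon b deg (et t) v with hz
  have hzcyc : ∀ t, δ (z t) = 0 := by
    intro t
    apply comp_eq_zero_inj b deg
    intro e'
    rw [hz, comp_delta b deg δ hgr e']
    by_cases he' : e' = et t
    · rw [he', comp_recon_self b deg (et t) v (hvet t)]
      exact hCv
    · rw [comp_recon_ne b deg (et t) e' v he' (hvet t)]
      funext i; rw [Cmul]; simp
  -- classes in homology
  set K := LinearMap.ker δ with hK
  set p := (LinearMap.range δ).comap K.subtype with hp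
  set π := p.mkQ with hπ
  set zz : ℕ → K := fun t => ⟨z t, LinearMap.mem_ker.2 (hzcyc t)⟩ with hzz
  set g : ℕ → dHomology δ := fun t => π (zz t) with hg
  -- the descending chain of spans of tails
  haveI hart : IsArtinian (MvPolynomial (Fin d) k) (dHomology δ) :=
    ((isFiniteLength_iff_isNoetherian_isArtinian).1 hfl).2
  set N : ℕ →o (Submodule (MvPolynomial (Fin d) k) (dHomology δ))ᵒᵈ :=
    ⟨fun u => Submodule.span _ (g '' Set.Ici u),
      fun a c hac => Submodule.span_mono (Set.image_mono (Set.Ici_subset_Ici.2 hac))⟩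
    with hN
  obtain ⟨u0, hu0⟩ := IsArtinian.monotone_stabilizes N
  have hstab : Submodule.span (MvPolynomial (Fin d) k) (g '' Set.Ici u0)
      = Submodule.span (MvPolynomial (Fin d) k) (g '' Set.Ici (u0 + 1)) :=
    hu0 (u0 + 1) (Nat.le_succ u0)
  have hmem : g u0 ∈ Submodule.span (MvPolynomial (Fin d) k) (g '' Set.Ici (u0 + 1)) := by
    rw [← hstab]
    exact Submodule.subset_span ⟨u0, le_refl u0, rfl⟩
  rw [Submodule.mem_span_set] at hmem
  obtain ⟨c, hcsupp, hcsum⟩ := hmem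
  have hchoice : ∀ y ∈ c.support, ∃ s : ℕ, u0 + 1 ≤ s ∧ g s = y := by
    intro y hy
    obtain ⟨s, hs1, hs2⟩ := hcsupp hy
    exact ⟨s, hs1, hs2⟩
  choose sfn hsge hgs using hchoice
  -- the element of K whose class is the tail combination
  set SK : K := ∑ y ∈ c.support.attach, c ↑y • zz (sfn ↑y y.2) with hSK
  have hπSK : π SK = g u0 := by
    rw [hSK, map_sum]
    have : ∀ y ∈ c.support.attach, π (c ↑y • zz (sfn ↑y y.2)) = c ↑y • (↑y : dHomology δ) := by
      intro y _
      rw [map_smul]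
      congr 1
      exact hgs ↑y y.2
    rw [Finset.sum_congr rfl this, Finset.sum_attach c.support (fun y => c y • y)]
    exact hcsum
  have hπdiff : π (zz u0 - SK) = 0 := by
    rw [map_sub, hπSK]
    exact sub_eq_zero_of_eq rfl
  have hmem2 : ((zz u0 - SK : K) : F) ∈ LinearMap.range δ := by
    have h1 : (zz u0 - SK) ∈ p := by
      rwa [hπ, Submodule.mkQ_apply, Submodule.Quotient.mk_eq_zero] at hπdiff
    rw [hp, Submodule.mem_comap] at h1
    exact h1
  obtain ⟨w0, hw0⟩ := hmem2
  -- coercion computation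
  have hcoe : ((zz u0 - SK : K) : F) = z u0 - ∑ y ∈ c.support.attach, c ↑y • z (sfn ↑y y.2) := by
    have h1 : ((zz u0 - SK : K) : F) = K.subtype (zz u0 - SK) := rfl
    rw [h1, map_sub, hSK, map_sum]
    have h2 : ∀ y ∈ c.support.attach,
        K.subtype (c ↑y • zz (sfn ↑y y.2)) = c ↑y • z (sfn ↑y y.2) :=
      fun y _ => by rw [map_smul]; rfl
    rw [Finset.sum_congr rfl h2]
    rfl
  -- now compute components in degree et u0
  have hvdeg : ccomp b deg (et u0) (δ w0) = v := by
    rw [hw0, hcoe, comp_sub, comp_sum]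
    have hterm : ∀ y ∈ c.support.attach,
        ccomp b deg (et u0) (c ↑y • z (sfn ↑y y.2)) = 0 := by
      intro y _
      rw [hz]
      apply comp_smul_recon b deg _ _ _ _ l₀
      · rw [het_l₀, het_l₀]
        have := hsge ↑y y.2
        omega
      · intro i hvi
        rw [het_l₀]
        have h1 := hBle i l₀
        have h2 : deg i l₀ ≤ (B : ℤ) := h1
        have ht : (0 : ℤ) ≤ (u0 : ℤ) := Int.ofNat_nonneg u0
        by_contra hc
        push_neg at hc
        omega
    rw [Finset.sum_congr rfl hterm, Finset.sum_const_zero, sub_zero, hz,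
      comp_recon_self b deg (et u0) v (hvet u0)]
  -- the preimage in coordinates
  set w' : ι → k := ccomp b deg (et u0) w0 with hw'
  have hw'supp : ∀ i, i ∉ S → w' i = 0 := by
    intro i hi
    apply comp_supp
    intro hall
    apply hi
    rw [hS, mem_Sl]
    refine ⟨Finset.mem_univ i, fun l hl => ?_⟩
    have := hall l
    rwa [hetdef, if_pos hl] at this
  have hCw' : Cmul b deg δ w' = v := by
    rw [hw', ← comp_delta b deg δ hgr (et u0) w0, hvdeg]
  refine ⟨w', ?_⟩
  rw [← Cmul_eq_Dop b deg δ S (hS ▸ hSdown) w' hw'supp, hCw']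

end Transfer5


end ABI

/-- Multigraded Avramov–Buchweitz–Iyengar bound: let `R = k[x₁,…,x_d]` and `F` a finitely
generated ℤᵈ-graded free `R`-module (homogeneous basis `b` with degrees `deg`) with a
square-zero `R`-linear differential `δ`, homogeneous of degree `0 ∈ ℤᵈ`. If
`H(F) = ker δ / im δ` is nonzero and of finite length as an `R`-module, then
`rank_R F ≥ 2^d`. -/
theorem rank_ge_two_pow_of_finite_length_homology
    (k : Type*) [Field k] (d : ℕ)
    (F : Type*) [AddCommGroup F] [Module (MvPolynomial (Fin d) k) F]
    (ι : Type*) [Fintype ι]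
    (b : Module.Basis ι (MvPolynomial (Fin d) k) F)
    (deg : ι → Fin d → ℤ)
    (δ : F →ₗ[MvPolynomial (Fin d) k] F) (hsq : δ ∘ₗ δ = 0)
    -- δ is homogeneous of degree 0 ∈ ℤᵈ
    (hgr : ∀ i j, IsHomogeneousOfDeg (b.repr (δ (b j)) i) (fun l => deg j l - deg i l))
    -- H(F) is nonzero
    (hH : ∃ x : F, δ x = 0 ∧ x ∉ LinearMap.range δ)
    -- H(F) has finite length
    (hfl : IsFiniteLength (MvPolynomial (Fin d) k) (dHomology δ)) :
    2 ^ d ≤ Module.finrank (MvPolynomial (Fin d) k) F := by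
  letI : DecidableEq ι := Classical.decEq ι
  rw [Module.finrank_eq_card_basis b]
  have h := ABI.core (X := deg) (C := ABI.Cm b deg δ) (ABI.Cm_compat b deg δ)
    (ABI.Cm_sq b deg δ hgr hsq)
    d Finset.univ Finset.univ
    (Finset.card_univ.trans (Fintype.card_fin d))
    (fun i p j _ _ _ _ => Finset.mem_univ p)
    (fun D' hD' e => ABI.transfer_vanish b deg δ hgr hfl D' hD' e)
    (ABI.transfer_nonexact b deg δ hgr hH)
  rwa [Finset.card_univ] at h
end
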